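/- arXiv:1901.02686 — 10 statements merged into one kernel-verified Lean document; each statement's English description precedes it below -/
import Mathlib

section
/- Let A be a commutative ring, M an A-module, and f an A-linear endomorphism of M. Then for every m ∈ M, the formal power series ∑_{i≥0} ι(f^i m) t^i (an element of (⋀M)[[t]], where f^0 = id) squares to zero; consequently, by the universal property of the exterior algebra, there exists a unique A-algebra homomorphism D(t) : ⋀M → (⋀M)[[t]] satisfying D(t)(ι m) = ∑_{i≥0} ι(f^i m) t^i for all m ∈ M. -/
open ExteriorAlgebra

theorem stmt_0 (A : Type*) [CommRing A] (M : Type*) [AddCommGroup M] [Module A M]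
    (f : Module.End A M) :
    (∀ m : M,
      (PowerSeries.mk fun i => ι A ((f ^ i) m) : PowerSeries (ExteriorAlgebra A M)) *
        PowerSeries.mk (fun i => ι A ((f ^ i) m)) = 0) ∧
    ∃! D : ExteriorAlgebra A M →ₐ[A] PowerSeries (ExteriorAlgebra A M),
      ∀ m : M, D (ι A m) = PowerSeries.mk fun i => ι A ((f ^ i) m) := by
  have hsq : ∀ m : M,
      (PowerSeries.mk fun i => ι A ((f ^ i) m) : PowerSeries (ExteriorAlgebra A M)) *
        PowerSeries.mk (fun i => ι A ((f ^ i) m)) = 0 := by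
    intro m
    ext n
    rw [PowerSeries.coeff_mul, map_zero]
    simp only [PowerSeries.coeff_mk]
    refine Finset.sum_involution (fun p _ => (p.2, p.1)) ?_ ?_ ?_ ?_
    · rintro ⟨i, j⟩ -
      rcases eq_or_ne i j with rfl | h
      · simp [ι_sq_zero]
      · exact ι_add_mul_swap _ _
    · rintro ⟨i, j⟩ - h
      simp only [Prod.mk.injEq, ne_eq, not_and]
      intro hji _
      exact h (by rw [← hji]; exact ι_sq_zero _)
    · rintro ⟨i, j⟩ hij
      simp only [Finset.HasAntidiagonal.mem_antidiagonal] at hij ⊢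
      omega
    · rintro ⟨i, j⟩ -; rfl
  refine ⟨hsq, ?_⟩
  set g : M →ₗ[A] PowerSeries (ExteriorAlgebra A M) :=
    { toFun := fun m => PowerSeries.mk fun i => ι A ((f ^ i) m)
      map_add' := fun x y => by ext n; simp
      map_smul' := fun c x => by ext n; simp } with hg
  refine ⟨ExteriorAlgebra.lift A ⟨g, hsq⟩, fun m => ?_, fun D hD => ?_⟩
  · exact ExteriorAlgebra.lift_ι_apply A g hsq m
  · refine ExteriorAlgebra.hom_ext (LinearMap.ext fun m => ?_)
    simp only [LinearMap.comp_apply, AlgHom.toLinearMap_apply]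
    rw [hD m, ExteriorAlgebra.lift_ι_apply]
    rfl
end

section
/- For every n ≥ 0 and every u ∈ ⋀M, ∑_{i+j=n} D_i(c_j(u)) equals u if n = 0 and equals 0 if n > 0, and likewise ∑_{i+j=n} c_i(D_j(u)) equals u if n = 0 and equals 0 if n > 0. In other words, the Hasse–Schmidt derivations D(t) and D̄(t), viewed as elements of (End_A(⋀M))[[t]] via their coefficient maps, are mutually inverse. -/
open ExteriorAlgebra PowerSeries Finset

lemma sum_antidiag_ite_right {R : Type*} [AddCommMonoid R] (n c : ℕ) (g : ℕ → R) :
    (∑ p ∈ antidiagonal n, if p.2 = c then g p.1 else 0) = if c ≤ n then g (n - c) else 0 := by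
  rcases le_or_gt c n with h | h
  · rw [if_pos h, Finset.sum_eq_single (n - c, c)]
    · simp
    · rintro ⟨a, b⟩ hb hne
      simp only [Finset.HasAntidiagonal.mem_antidiagonal] at hb
      rcases eq_or_ne b c with rfl | h2
      · have : a = n - b := by omega
        exact absurd (by simp [this]) hne
      · simp [h2]
    · intro hmem
      exact absurd (by simp only [Finset.HasAntidiagonal.mem_antidiagonal]; omega) hmem
  · rw [if_neg (not_le.2 h)]
    apply Finset.sum_eq_zero
    rintro ⟨a, b⟩ hb
    simp only [Finset.HasAntidiagonal.mem_antidiagonal] at hb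
    have : b ≠ c := by omega
    simp [this]

lemma sum_antidiag_ite_left {R : Type*} [AddCommMonoid R] (n c : ℕ) (g : ℕ → R) :
    (∑ p ∈ antidiagonal n, if p.1 = c then g p.2 else 0) = if c ≤ n then g (n - c) else 0 := by
  rcases le_or_gt c n with h | h
  · rw [if_pos h, Finset.sum_eq_single (c, n - c)]
    · simp
    · rintro ⟨a, b⟩ hb hne
      simp only [Finset.HasAntidiagonal.mem_antidiagonal] at hb
      rcases eq_or_ne a c with rfl | h2
      · have : b = n - a := by omega
        exact absurd (by simp [this]) hne
      · simp [h2]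
    · intro hmem
      exact absurd (by simp only [Finset.HasAntidiagonal.mem_antidiagonal]; omega) hmem
  · rw [if_neg (not_le.2 h)]
    apply Finset.sum_eq_zero
    rintro ⟨a, b⟩ hb
    simp only [Finset.HasAntidiagonal.mem_antidiagonal] at hb
    have : a ≠ c := by omega
    simp [this]

lemma conv_aux {R : Type*} [NonUnitalNonAssocSemiring R] (x y : ℕ → ℕ → R) (n : ℕ) :
    (∑ p ∈ antidiagonal n, ∑ q ∈ antidiagonal p.2, ∑ r ∈ antidiagonal p.1,
      x r.1 q.1 * y r.2 q.2)
    = ∑ p ∈ antidiagonal n, (∑ r ∈ antidiagonal p.1, x r.1 r.2) *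
        (∑ r ∈ antidiagonal p.2, y r.1 r.2) := by
  simp_rw [Finset.sum_mul_sum]
  calc (∑ p ∈ antidiagonal n, ∑ q ∈ antidiagonal p.2, ∑ r ∈ antidiagonal p.1,
        x r.1 q.1 * y r.2 q.2)
      = ∑ p ∈ antidiagonal n, ∑ z ∈ antidiagonal p.2 ×ˢ antidiagonal p.1,
          x z.2.1 z.1.1 * y z.2.2 z.1.2 := by
        exact Finset.sum_congr rfl fun p _ =>
          (Finset.sum_product (s := antidiagonal p.2) (t := antidiagonal p.1)
            (f := fun z => x z.2.1 z.1.1 * y z.2.2 z.1.2)).symm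
    _ = ∑ z ∈ (antidiagonal n).sigma (fun p => antidiagonal p.2 ×ˢ antidiagonal p.1),
          x z.2.2.1 z.2.1.1 * y z.2.2.2 z.2.1.2 :=
        (Finset.sum_sigma (s := antidiagonal n) (t := fun p => antidiagonal p.2 ×ˢ antidiagonal p.1)
          (f := fun z => x z.2.2.1 z.2.1.1 * y z.2.2.2 z.2.1.2)).symm
    _ = ∑ z ∈ (antidiagonal n).sigma (fun p => antidiagonal p.1 ×ˢ antidiagonal p.2),
          x z.2.1.1 z.2.1.2 * y z.2.2.1 z.2.2.2 := by
        refine Finset.sum_nbij'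
          (fun z => ⟨(z.2.2.1 + z.2.1.1, z.2.2.2 + z.2.1.2), ((z.2.2.1, z.2.1.1), (z.2.2.2, z.2.1.2))⟩)
          (fun z => ⟨(z.2.1.1 + z.2.2.1, z.2.1.2 + z.2.2.2), ((z.2.1.2, z.2.2.2), (z.2.1.1, z.2.2.1))⟩)
          ?_ ?_ ?_ ?_ ?_
        · rintro ⟨p, q, r⟩ h
          simp only [Finset.mem_sigma, Finset.mem_product, Finset.HasAntidiagonal.mem_antidiagonal] at h ⊢
          obtain ⟨h1, h2, h3⟩ := h
          exact ⟨by omega, trivial, trivial⟩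
        · rintro ⟨p, r, s⟩ h
          simp only [Finset.mem_sigma, Finset.mem_product, Finset.HasAntidiagonal.mem_antidiagonal] at h ⊢
          obtain ⟨h1, h2, h3⟩ := h
          exact ⟨by omega, trivial, trivial⟩
        · rintro ⟨p, q, r⟩ h
          simp only [Finset.mem_sigma, Finset.mem_product, Finset.HasAntidiagonal.mem_antidiagonal] at h
          obtain ⟨h1, h2, h3⟩ := h
          simp only [Sigma.mk.inj_iff, Prod.mk.injEq, heq_eq_eq, Prod.ext_iff]
          exact ⟨⟨by omega, by omega⟩, trivial⟩
        · rintro ⟨p, r, s⟩ h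
          simp only [Finset.mem_sigma, Finset.mem_product, Finset.HasAntidiagonal.mem_antidiagonal] at h
          obtain ⟨h1, h2, h3⟩ := h
          simp only [Sigma.mk.inj_iff, Prod.mk.injEq, heq_eq_eq, Prod.ext_iff]
          exact ⟨⟨by omega, by omega⟩, trivial⟩
        · rintro ⟨p, q, r⟩ h
          rfl
    _ = ∑ p ∈ antidiagonal n, ∑ z ∈ antidiagonal p.1 ×ˢ antidiagonal p.2,
          x z.1.1 z.1.2 * y z.2.1 z.2.2 :=
        Finset.sum_sigma (s := antidiagonal n) (t := fun p => antidiagonal p.1 ×ˢ antidiagonal p.2)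
          (f := fun z => x z.2.1.1 z.2.1.2 * y z.2.2.1 z.2.2.2)
    _ = ∑ p ∈ antidiagonal n, ∑ r ∈ antidiagonal p.1, ∑ s ∈ antidiagonal p.2,
          x r.1 r.2 * y s.1 s.2 := Finset.sum_congr rfl fun p _ =>
        Finset.sum_product (s := antidiagonal p.1) (t := antidiagonal p.2)
          (f := fun z => x z.1.1 z.1.2 * y z.2.1 z.2.2)

/-- Substitute the outer variable by `t` after applying `E` to each coefficient. -/
noncomputable def Tring (R : Type*) [Ring R] (E : R →+* PowerSeries R) :
    PowerSeries R →+* PowerSeries R where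
  toFun g := PowerSeries.mk fun n =>
    ∑ p ∈ antidiagonal n, PowerSeries.coeff p.1 (E (PowerSeries.coeff p.2 g))
  map_zero' := by ext n; simp
  map_add' g h := by
    ext n
    simp [map_add, Finset.sum_add_distrib]
  map_one' := by
    ext n
    simp only [coeff_mk, PowerSeries.coeff_one, apply_ite E, map_one, map_zero,
      apply_ite (PowerSeries.coeff _), PowerSeries.coeff_one]
    rw [sum_antidiag_ite_right n 0 (fun k => if k = 0 then (1 : R) else 0)]
    simp
  map_mul' g h := by
    ext n
    simp only [coeff_mk, PowerSeries.coeff_mul, map_sum, map_mul]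
    exact conv_aux (fun c a => PowerSeries.coeff c (E (PowerSeries.coeff a g)))
      (fun d b => PowerSeries.coeff d (E (PowerSeries.coeff b h))) n

lemma coeff_Tring {R : Type*} [Ring R] (E : R →+* PowerSeries R) (g : PowerSeries R) (n : ℕ) :
    PowerSeries.coeff n (Tring R E g)
      = ∑ p ∈ antidiagonal n, PowerSeries.coeff p.1 (E (PowerSeries.coeff p.2 g)) := by
  simp only [Tring, RingHom.coe_mk, MonoidHom.coe_mk, OneHom.coe_mk, coeff_mk]

lemma Tring_C {R : Type*} [Ring R] (E : R →+* PowerSeries R) (r : R) :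
    Tring R E (PowerSeries.C r) = E r := by
  ext n
  rw [coeff_Tring]
  simp only [PowerSeries.coeff_C, apply_ite E, map_zero, apply_ite (PowerSeries.coeff _)]
  rw [show (∑ p ∈ antidiagonal n, if p.2 = 0 then PowerSeries.coeff p.1 (E r) else 0)
      = if 0 ≤ n then PowerSeries.coeff (n - 0) (E r) else 0 from
    sum_antidiag_ite_right n 0 (fun k => PowerSeries.coeff k (E r))]
  simp

/-- Algebra version of `Tring`. -/
noncomputable def Talg {A R : Type*} [CommRing A] [Ring R] [Algebra A R]
    (E : R →ₐ[A] PowerSeries R) : PowerSeries R →ₐ[A] PowerSeries R :=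
  { Tring R E.toRingHom with
    commutes' := fun a => by
      show Tring R E.toRingHom (algebraMap A (PowerSeries R) a) = _
      rw [PowerSeries.algebraMap_apply, Tring_C]
      show E (algebraMap A R a) = _
      rw [E.commutes a]
      exact PowerSeries.algebraMap_apply }

lemma Talg_apply {A R : Type*} [CommRing A] [Ring R] [Algebra A R]
    (E : R →ₐ[A] PowerSeries R) (g : PowerSeries R) :
    Talg E g = Tring R E.toRingHom g := rfl

/-- `C` as an `A`-algebra hom. -/
noncomputable def Calg (A R : Type*) [CommRing A] [Ring R] [Algebra A R] :
    R →ₐ[A] PowerSeries R :=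
  { (PowerSeries.C : R →+* PowerSeries R) with
    commutes' := fun a => (PowerSeries.algebraMap_apply (A := R)).symm }

lemma Calg_apply {A R : Type*} [CommRing A] [Ring R] [Algebra A R] (r : R) :
    Calg A R r = PowerSeries.C r := rfl

theorem stmt_1 (A : Type*) [CommRing A] (M : Type*) [AddCommGroup M] [Module A M]
    (f : Module.End A M)
    (D Dbar : ExteriorAlgebra A M →ₐ[A] PowerSeries (ExteriorAlgebra A M))
    (hD : ∀ m : M, D (ι A m) = PowerSeries.mk fun i => ι A ((f ^ i) m))
    (hDbar : ∀ m : M,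
      Dbar (ι A m) = PowerSeries.C (ι A m) - PowerSeries.C (ι A (f m)) * PowerSeries.X) :
    ∀ n : ℕ, ∀ u : ExteriorAlgebra A M,
      (∑ p ∈ Finset.HasAntidiagonal.antidiagonal n,
          PowerSeries.coeff p.1 (D (PowerSeries.coeff p.2 (Dbar u)))
        = if n = 0 then u else 0) ∧
      (∑ p ∈ Finset.HasAntidiagonal.antidiagonal n,
          PowerSeries.coeff p.1 (Dbar (PowerSeries.coeff p.2 (D u)))
        = if n = 0 then u else 0) := by
  set R := ExteriorAlgebra A M with hR
  have h1 : (Talg D).comp Dbar = Calg A R := by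
    refine ExteriorAlgebra.hom_ext (LinearMap.ext fun m => ?_)
    show Talg D (Dbar (ι A m)) = Calg A R (ι A m)
    rw [hDbar m, Talg_apply, Calg_apply]
    ext n
    rw [coeff_Tring]
    have key : ∀ p : ℕ × ℕ,
        PowerSeries.coeff p.1 (D.toRingHom (PowerSeries.coeff p.2
          (PowerSeries.C (ι A m) - PowerSeries.C (ι A (f m)) * PowerSeries.X)))
        = (if p.2 = 0 then ι A ((f ^ p.1) m) else 0)
          - (if p.2 = 1 then ι A ((f ^ p.1) (f m)) else 0) := by
      intro p
      rw [map_sub, map_sub, map_sub]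
      simp only [PowerSeries.coeff_C, PowerSeries.coeff_C_mul, PowerSeries.coeff_X,
        mul_ite, mul_one, mul_zero, AlgHom.toRingHom_eq_coe, RingHom.coe_coe,
        apply_ite ⇑D, map_zero, hD, apply_ite (⇑(PowerSeries.coeff p.1)), coeff_mk]
    rw [Finset.sum_congr rfl fun p _ => key p, Finset.sum_sub_distrib,
      sum_antidiag_ite_right n 0 (fun k => ι A ((f ^ k) m)),
      sum_antidiag_ite_right n 1 (fun k => ι A ((f ^ k) (f m))), PowerSeries.coeff_C]
    cases n with
    | zero => simp
    | succ k =>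
      simp [Nat.succ_le_succ (Nat.zero_le k), pow_succ, Module.End.mul_apply]
  have h2 : (Talg Dbar).comp D = Calg A R := by
    refine ExteriorAlgebra.hom_ext (LinearMap.ext fun m => ?_)
    show Talg Dbar (D (ι A m)) = Calg A R (ι A m)
    rw [hD m, Talg_apply, Calg_apply]
    ext n
    rw [coeff_Tring]
    have key : ∀ p : ℕ × ℕ,
        PowerSeries.coeff p.1 (Dbar.toRingHom (PowerSeries.coeff p.2
          (PowerSeries.mk fun i => ι A ((f ^ i) m))))
        = (if p.1 = 0 then ι A ((f ^ p.2) m) else 0)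
          - (if p.1 = 1 then ι A (f ((f ^ p.2) m)) else 0) := by
      intro p
      simp only [coeff_mk, AlgHom.toRingHom_eq_coe, RingHom.coe_coe, hDbar, map_sub,
        PowerSeries.coeff_C, PowerSeries.coeff_C_mul, PowerSeries.coeff_X,
        mul_ite, mul_one, mul_zero]
    rw [Finset.sum_congr rfl fun p _ => key p, Finset.sum_sub_distrib,
      sum_antidiag_ite_left n 0 (fun k => ι A ((f ^ k) m)),
      sum_antidiag_ite_left n 1 (fun k => ι A (f ((f ^ k) m))), PowerSeries.coeff_C]
    cases n with
    | zero => simp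
    | succ k =>
      simp [Nat.succ_le_succ (Nat.zero_le k), pow_succ', Module.End.mul_apply]
  intro n u
  constructor
  · have e : Talg D (Dbar u) = Calg A R u := by
      rw [← AlgHom.comp_apply, h1]
    have := congrArg (PowerSeries.coeff n) e
    rw [Talg_apply, coeff_Tring, Calg_apply, PowerSeries.coeff_C] at this
    simpa using this
  · have e : Talg Dbar (D u) = Calg A R u := by
      rw [← AlgHom.comp_apply, h2]
    have := congrArg (PowerSeries.coeff n) e
    rw [Talg_apply, coeff_Tring, Calg_apply, PowerSeries.coeff_C] at this
    simpa using this
end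

section
/- The inverse of an invertible Hasse–Schmidt derivation is a Hasse–Schmidt derivation: if (𝒟_i)_{i≥0} is an HS-derivation on ⋀M and (ℰ_j)_{j≥0} is a family of A-linear maps on ⋀M such that for every n ≥ 0 both ∑_{i+j=n} 𝒟_i ∘ ℰ_j and ∑_{i+j=n} ℰ_i ∘ 𝒟_j equal the identity when n = 0 and the zero map when n > 0, then (ℰ_j)_{j≥0} is also an HS-derivation, i.e. ℰ_n(u ∧ v) = ∑_{p+q=n} ℰ_p(u) ∧ ℰ_q(v) for all u, v ∈ ⋀M and all n ≥ 0. -/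
lemma assoc3 {R : Type*} [AddCommMonoid R] (n : ℕ) (H : ℕ → ℕ → ℕ → R) :
    ∑ x ∈ Finset.HasAntidiagonal.antidiagonal n, ∑ y ∈ Finset.HasAntidiagonal.antidiagonal x.1, H y.1 y.2 x.2 =
    ∑ x ∈ Finset.HasAntidiagonal.antidiagonal n, ∑ y ∈ Finset.HasAntidiagonal.antidiagonal x.2, H x.1 y.1 y.2 := by
  rw [Finset.sum_sigma', Finset.sum_sigma']
  refine Finset.sum_nbij' (fun z => ⟨(z.2.1, z.2.2 + z.1.2), (z.2.2, z.1.2)⟩)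
    (fun z => ⟨(z.1.1 + z.2.1, z.2.2), (z.1.1, z.2.1)⟩) ?_ ?_ ?_ ?_ ?_ <;>
    rintro ⟨⟨i, j⟩, ⟨p, q⟩⟩ h <;>
    simp_all [Finset.mem_sigma, Finset.HasAntidiagonal.mem_antidiagonal] <;> omega

lemma shuffle4 {R : Type*} [AddCommMonoid R] (n : ℕ) (G : ℕ → ℕ → ℕ → ℕ → R) :
    ∑ x ∈ Finset.HasAntidiagonal.antidiagonal n, ∑ y ∈ Finset.HasAntidiagonal.antidiagonal x.1,
      ∑ z ∈ Finset.HasAntidiagonal.antidiagonal x.2, G y.1 y.2 z.1 z.2 =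
    ∑ x ∈ Finset.HasAntidiagonal.antidiagonal n, ∑ y ∈ Finset.HasAntidiagonal.antidiagonal x.1,
      ∑ z ∈ Finset.HasAntidiagonal.antidiagonal x.2, G y.1 z.1 y.2 z.2 := by
  calc
    ∑ x ∈ Finset.HasAntidiagonal.antidiagonal n, ∑ y ∈ Finset.HasAntidiagonal.antidiagonal x.1,
        ∑ z ∈ Finset.HasAntidiagonal.antidiagonal x.2, G y.1 y.2 z.1 z.2
      = ∑ x ∈ Finset.HasAntidiagonal.antidiagonal n, ∑ y ∈ Finset.HasAntidiagonal.antidiagonal x.2,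
        ∑ z ∈ Finset.HasAntidiagonal.antidiagonal y.2, G x.1 y.1 z.1 z.2 :=
      assoc3 n (fun p q j => ∑ z ∈ Finset.HasAntidiagonal.antidiagonal j, G p q z.1 z.2)
    _ = ∑ x ∈ Finset.HasAntidiagonal.antidiagonal n, ∑ y ∈ Finset.HasAntidiagonal.antidiagonal x.2,
        ∑ z ∈ Finset.HasAntidiagonal.antidiagonal y.1, G x.1 z.1 z.2 y.2 :=
      Finset.sum_congr rfl fun x _ =>
        (assoc3 x.2 (fun q a b => G x.1 q a b)).symm
    _ = ∑ x ∈ Finset.HasAntidiagonal.antidiagonal n, ∑ y ∈ Finset.HasAntidiagonal.antidiagonal x.2,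
        ∑ z ∈ Finset.HasAntidiagonal.antidiagonal y.1, G x.1 z.2 z.1 y.2 :=
      Finset.sum_congr rfl fun x _ => Finset.sum_congr rfl fun y _ =>
        (Finset.Nat.sum_antidiagonal_swap (f := fun z => G x.1 z.1 z.2 y.2)).symm
    _ = ∑ x ∈ Finset.HasAntidiagonal.antidiagonal n, ∑ y ∈ Finset.HasAntidiagonal.antidiagonal x.2,
        ∑ z ∈ Finset.HasAntidiagonal.antidiagonal y.2, G x.1 z.1 y.1 z.2 :=
      Finset.sum_congr rfl fun x _ => assoc3 x.2 (fun a q b => G x.1 q a b)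
    _ = ∑ x ∈ Finset.HasAntidiagonal.antidiagonal n, ∑ y ∈ Finset.HasAntidiagonal.antidiagonal x.1,
        ∑ z ∈ Finset.HasAntidiagonal.antidiagonal x.2, G y.1 z.1 y.2 z.2 :=
      (assoc3 n (fun p a w => ∑ z ∈ Finset.HasAntidiagonal.antidiagonal w, G p z.1 a z.2)).symm

theorem stmt_5 (A : Type*) [CommRing A] (M : Type*) [AddCommGroup M] [Module A M]
    (D E : ℕ → ExteriorAlgebra A M →ₗ[A] ExteriorAlgebra A M)
    (hD : ∀ (i : ℕ) (u v : ExteriorAlgebra A M),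
      D i (u * v) = ∑ p ∈ Finset.HasAntidiagonal.antidiagonal i, D p.1 u * D p.2 v)
    (hDE : ∀ (n : ℕ) (u : ExteriorAlgebra A M),
      ∑ p ∈ Finset.HasAntidiagonal.antidiagonal n, D p.1 (E p.2 u) = if n = 0 then u else 0)
    (hED : ∀ (n : ℕ) (u : ExteriorAlgebra A M),
      ∑ p ∈ Finset.HasAntidiagonal.antidiagonal n, E p.1 (D p.2 u) = if n = 0 then u else 0) :
    ∀ (n : ℕ) (u v : ExteriorAlgebra A M),
      E n (u * v) = ∑ p ∈ Finset.HasAntidiagonal.antidiagonal n, E p.1 u * E p.2 v := by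
  intro n
  induction n using Nat.strong_induction_on with
  | _ n IH =>
  have h0 : ∀ w, D 0 (E 0 w) = w := by
    intro w
    have := hDE 0 w
    simpa [Finset.Nat.antidiagonal_zero] using this
  have key : ∀ x y : ExteriorAlgebra A M,
      E n (D 0 x * D 0 y) =
        ∑ p ∈ Finset.HasAntidiagonal.antidiagonal n, E p.1 (D 0 x) * E p.2 (D 0 y) := by
    intro x y
    have hmem : ((n, 0) : ℕ × ℕ) ∈ Finset.HasAntidiagonal.antidiagonal n := by
      simp [Finset.HasAntidiagonal.mem_antidiagonal]
    -- Step A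
    have stepA : ∑ p ∈ Finset.HasAntidiagonal.antidiagonal n, ∑ q ∈ Finset.HasAntidiagonal.antidiagonal p.2,
        E p.1 (D q.1 x * D q.2 y) = (if n = 0 then x * y else 0) := by
      rw [← hED n (x * y)]
      refine Finset.sum_congr rfl fun p _ => ?_
      rw [hD p.2 x y, map_sum]
    -- Step C
    have stepC : ∑ p ∈ Finset.HasAntidiagonal.antidiagonal n, ∑ q ∈ Finset.HasAntidiagonal.antidiagonal p.1,
        ∑ r ∈ Finset.HasAntidiagonal.antidiagonal p.2, E q.1 (D r.1 x) * E q.2 (D r.2 y) =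
        (if n = 0 then x * y else 0) := by
      rw [shuffle4 n (fun p q a b => E p (D a x) * E q (D b y))]
      have : ∀ p : ℕ × ℕ, p ∈ Finset.HasAntidiagonal.antidiagonal n →
          (∑ q ∈ Finset.HasAntidiagonal.antidiagonal p.1, ∑ r ∈ Finset.HasAntidiagonal.antidiagonal p.2,
            E q.1 (D q.2 x) * E r.1 (D r.2 y)) =
          (if p.1 = 0 then x else 0) * (if p.2 = 0 then y else 0) := by
        intro p _
        rw [← Finset.sum_mul_sum, hED p.1 x, hED p.2 y]
      rw [Finset.sum_congr rfl this]
      rcases n with _ | n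
      · simp [Finset.Nat.antidiagonal_zero]
      · rw [if_neg (Nat.succ_ne_zero n)]
        refine Finset.sum_eq_zero fun p hp => ?_
        have hpn : p.1 + p.2 = n + 1 := Finset.HasAntidiagonal.mem_antidiagonal.mp hp
        rcases p with ⟨a, b⟩
        simp only at hpn ⊢
        rcases Nat.eq_zero_or_pos a with rfl | ha
        · have hb : b ≠ 0 := by omega
          simp [hb]
        · have ha' : a ≠ 0 := by omega
          simp [ha']
    -- split off the (n, 0) term in both
    rw [← Finset.sum_erase_add _ _ hmem] at stepA stepC
    have eA : ∑ q ∈ Finset.HasAntidiagonal.antidiagonal (((n, 0) : ℕ × ℕ)).2,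
        E ((n, 0) : ℕ × ℕ).1 (D q.1 x * D q.2 y) = E n (D 0 x * D 0 y) := by
      simp [Finset.Nat.antidiagonal_zero]
    have eC : ∑ q ∈ Finset.HasAntidiagonal.antidiagonal (((n, 0) : ℕ × ℕ)).1,
        ∑ r ∈ Finset.HasAntidiagonal.antidiagonal (((n, 0) : ℕ × ℕ)).2,
          E q.1 (D r.1 x) * E q.2 (D r.2 y) =
        ∑ p ∈ Finset.HasAntidiagonal.antidiagonal n, E p.1 (D 0 x) * E p.2 (D 0 y) := by
      simp [Finset.Nat.antidiagonal_zero]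
    rw [eA] at stepA
    rw [eC] at stepC
    -- identify the erased sums using the induction hypothesis
    have hsame : ∑ p ∈ (Finset.HasAntidiagonal.antidiagonal n).erase (n, 0),
        ∑ q ∈ Finset.HasAntidiagonal.antidiagonal p.2, E p.1 (D q.1 x * D q.2 y) =
        ∑ p ∈ (Finset.HasAntidiagonal.antidiagonal n).erase (n, 0),
          ∑ q ∈ Finset.HasAntidiagonal.antidiagonal p.1, ∑ r ∈ Finset.HasAntidiagonal.antidiagonal p.2,
            E q.1 (D r.1 x) * E q.2 (D r.2 y) := by
      refine Finset.sum_congr rfl fun p hp => ?_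
      have hne : p ≠ (n, 0) := (Finset.mem_erase.mp hp).1
      have hpn : p.1 + p.2 = n :=
        Finset.HasAntidiagonal.mem_antidiagonal.mp (Finset.mem_erase.mp hp).2
      have hlt : p.1 < n := by
        rcases p with ⟨a, b⟩
        simp only at hpn ⊢
        have hb : b ≠ 0 := by
          rintro rfl
          have : a = n := by omega
          subst this
          exact hne rfl
        omega
      calc ∑ q ∈ Finset.HasAntidiagonal.antidiagonal p.2, E p.1 (D q.1 x * D q.2 y)
          = ∑ q ∈ Finset.HasAntidiagonal.antidiagonal p.2, ∑ r ∈ Finset.HasAntidiagonal.antidiagonal p.1,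
              E r.1 (D q.1 x) * E r.2 (D q.2 y) :=
            Finset.sum_congr rfl fun q _ => IH p.1 hlt (D q.1 x) (D q.2 y)
        _ = ∑ q ∈ Finset.HasAntidiagonal.antidiagonal p.1, ∑ r ∈ Finset.HasAntidiagonal.antidiagonal p.2,
              E q.1 (D r.1 x) * E q.2 (D r.2 y) := Finset.sum_comm
    rw [hsame] at stepA
    exact add_left_cancel (stepA.trans stepC.symm)
  intro u v
  have := key (E 0 u) (E 0 v)
  rwa [h0 u, h0 v] at this
end

section
/- (Integration by parts.) Let (𝒟_i)_{i≥0} be an HS-derivation on ⋀M and (ℰ_j)_{j≥0} its inverse, i.e. for every n ≥ 0 both ∑_{i+j=n} 𝒟_i ∘ ℰ_j and ∑_{i+j=n} ℰ_i ∘ 𝒟_j equal the identity when n = 0 and the zero map otherwise. Then for all u, v ∈ ⋀M and all k ≥ 0: 𝒟_k(u) ∧ v = ∑_{i+j=k} 𝒟_i(u ∧ ℰ_j(v)) and u ∧ ℰ_k(v) = ∑_{i+j=k} ℰ_i(𝒟_j(u) ∧ v). -/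
lemma tri_sum {X : Type*} [AddCommMonoid X] (k : ℕ) (f : ℕ → ℕ → ℕ → X) :
    ∑ p ∈ Finset.HasAntidiagonal.antidiagonal k, ∑ q ∈ Finset.HasAntidiagonal.antidiagonal p.1, f q.1 q.2 p.2 =
    ∑ p ∈ Finset.HasAntidiagonal.antidiagonal k, ∑ q ∈ Finset.HasAntidiagonal.antidiagonal p.2, f p.1 q.1 q.2 := by
  rw [Finset.sum_sigma', Finset.sum_sigma']
  apply Finset.sum_nbij' (fun x => ⟨(x.2.1, x.2.2 + x.1.2), (x.2.2, x.1.2)⟩)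
    (fun x => ⟨(x.1.1 + x.2.1, x.2.2), (x.1.1, x.2.1)⟩)
  · rintro ⟨⟨a,b⟩,⟨c,d⟩⟩ h
    simp only [Finset.mem_sigma, Finset.HasAntidiagonal.mem_antidiagonal] at h ⊢
    exact ⟨by omega, trivial⟩
  · rintro ⟨⟨a,b⟩,⟨c,d⟩⟩ h
    simp only [Finset.mem_sigma, Finset.HasAntidiagonal.mem_antidiagonal] at h ⊢
    exact ⟨by omega, trivial⟩
  · rintro ⟨⟨a,b⟩,⟨c,d⟩⟩ h
    simp only [Finset.mem_sigma, Finset.HasAntidiagonal.mem_antidiagonal] at h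
    obtain ⟨h1, h2⟩ := h
    subst h2; rfl
  · rintro ⟨⟨a,b⟩,⟨c,d⟩⟩ h
    simp only [Finset.mem_sigma, Finset.HasAntidiagonal.mem_antidiagonal] at h
    obtain ⟨h1, h2⟩ := h
    subst h2; rfl
  · rintro ⟨⟨a,b⟩,⟨c,d⟩⟩ h
    rfl

theorem stmt_6 (A : Type*) [CommRing A] (M : Type*) [AddCommGroup M] [Module A M]
    (D E : ℕ → ExteriorAlgebra A M →ₗ[A] ExteriorAlgebra A M)
    (hD : ∀ (i : ℕ) (u v : ExteriorAlgebra A M),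
      D i (u * v) = ∑ p ∈ Finset.HasAntidiagonal.antidiagonal i, D p.1 u * D p.2 v)
    (hDE : ∀ (n : ℕ) (u : ExteriorAlgebra A M),
      ∑ p ∈ Finset.HasAntidiagonal.antidiagonal n, D p.1 (E p.2 u) = if n = 0 then u else 0)
    (hED : ∀ (n : ℕ) (u : ExteriorAlgebra A M),
      ∑ p ∈ Finset.HasAntidiagonal.antidiagonal n, E p.1 (D p.2 u) = if n = 0 then u else 0) :
    ∀ (k : ℕ) (u v : ExteriorAlgebra A M),
      D k u * v = ∑ p ∈ Finset.HasAntidiagonal.antidiagonal k, D p.1 (u * E p.2 v) ∧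
      u * E k v = ∑ p ∈ Finset.HasAntidiagonal.antidiagonal k, E p.1 (D p.2 u * v) := by
  have h1 : ∀ (k : ℕ) (u v : ExteriorAlgebra A M),
      D k u * v = ∑ p ∈ Finset.HasAntidiagonal.antidiagonal k, D p.1 (u * E p.2 v) := by
    intro k u v
    calc D k u * v
        = ∑ p ∈ Finset.HasAntidiagonal.antidiagonal k,
            D p.1 u * (if p.2 = 0 then v else 0) := by
          rw [Finset.sum_eq_single (k, 0)]
          · simp
          · rintro ⟨a, b⟩ hp hne
            simp only [Finset.HasAntidiagonal.mem_antidiagonal] at hp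
            have : b ≠ 0 := by
              rintro rfl
              exact hne (by simp [← hp])
            simp [this]
          · intro h
            exact absurd (Finset.HasAntidiagonal.mem_antidiagonal.mpr (by simp)) h
      _ = ∑ p ∈ Finset.HasAntidiagonal.antidiagonal k,
            ∑ q ∈ Finset.HasAntidiagonal.antidiagonal p.2, D p.1 u * D q.1 (E q.2 v) := by
          refine Finset.sum_congr rfl fun p _ => ?_
          rw [← Finset.mul_sum, hDE]
      _ = ∑ p ∈ Finset.HasAntidiagonal.antidiagonal k,
            ∑ q ∈ Finset.HasAntidiagonal.antidiagonal p.1, D q.1 u * D q.2 (E p.2 v) :=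
          (tri_sum k (fun a b c => D a u * D b (E c v))).symm
      _ = ∑ p ∈ Finset.HasAntidiagonal.antidiagonal k, D p.1 (u * E p.2 v) := by
          refine Finset.sum_congr rfl fun p _ => ?_
          rw [hD]
  intro k u v
  refine ⟨h1 k u v, ?_⟩
  calc u * E k v
      = ∑ p ∈ Finset.HasAntidiagonal.antidiagonal k, (if p.1 = 0 then u * E p.2 v else 0) := by
        rw [Finset.sum_eq_single (0, k)]
        · simp
        · rintro ⟨a, b⟩ hp hne
          simp only [Finset.HasAntidiagonal.mem_antidiagonal] at hp
          have : a ≠ 0 := by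
            rintro rfl
            exact hne (by simp [← hp])
          simp [this]
        · intro h
          exact absurd (Finset.HasAntidiagonal.mem_antidiagonal.mpr (by simp)) h
    _ = ∑ p ∈ Finset.HasAntidiagonal.antidiagonal k,
          ∑ q ∈ Finset.HasAntidiagonal.antidiagonal p.1, E q.1 (D q.2 (u * E p.2 v)) := by
        refine Finset.sum_congr rfl fun p _ => ?_
        rw [hED]
    _ = ∑ p ∈ Finset.HasAntidiagonal.antidiagonal k,
          ∑ q ∈ Finset.HasAntidiagonal.antidiagonal p.2, E p.1 (D q.1 (u * E q.2 v)) :=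
        tri_sum k (fun a b c => E a (D b (u * E c v)))
    _ = ∑ p ∈ Finset.HasAntidiagonal.antidiagonal k, E p.1 (D p.2 u * v) := by
        refine Finset.sum_congr rfl fun p _ => ?_
        rw [← map_sum, ← h1 p.2 u v]
end

section
/- For any A-linear endomorphism f of M and any integers k > j ≥ 0, the coefficient map c_k of the Hasse–Schmidt derivation D̄(t) vanishes on the j-th exterior power: c_k(u) = 0 for every u ∈ ⋀^j M. (Equivalently, the restriction of D̄(t) to ⋀^j M is a polynomial in t of degree at most j.) -/
open ExteriorAlgebra

theorem stmt_7 (A : Type*) [CommRing A] (M : Type*) [AddCommGroup M] [Module A M]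
    (f : Module.End A M)
    (Dbar : ExteriorAlgebra A M →ₐ[A] PowerSeries (ExteriorAlgebra A M))
    (hDbar : ∀ m : M,
      Dbar (ι A m) = PowerSeries.C (ι A m) - PowerSeries.C (ι A (f m)) * PowerSeries.X) :
    ∀ k j : ℕ, j < k →
      ∀ u ∈ (LinearMap.range (ι A : M →ₗ[A] ExteriorAlgebra A M)) ^ j,
        PowerSeries.coeff k (Dbar u) = 0 := by
  have key : ∀ j : ℕ, ∀ u ∈ (LinearMap.range (ι A : M →ₗ[A] ExteriorAlgebra A M)) ^ j,
      ∀ k : ℕ, j < k → PowerSeries.coeff k (Dbar u) = 0 := by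
    intro j u hu
    induction hu using Submodule.pow_induction_on_left' with
    | algebraMap r =>
      intro k hk
      rw [AlgHom.commutes]
      rw [PowerSeries.algebraMap_apply, PowerSeries.coeff_C,
        if_neg (Nat.lt_of_le_of_lt (Nat.zero_le _) hk).ne']
    | add x y i hx hy ihx ihy =>
      intro k hk
      rw [map_add, map_add, ihx k hk, ihy k hk, add_zero]
    | mem_mul m hm i x hx ih =>
      intro k hk
      obtain ⟨m', rfl⟩ := hm
      obtain ⟨k, rfl⟩ := Nat.exists_eq_add_of_lt (Nat.lt_of_le_of_lt (Nat.zero_le _) hk)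
      rw [zero_add] at hk ⊢
      rw [map_mul, hDbar, sub_mul, map_sub, mul_assoc, PowerSeries.coeff_C_mul,
        PowerSeries.coeff_C_mul, PowerSeries.coeff_succ_X_mul,
        ih (k + 1) (Nat.lt_of_succ_lt hk), ih k (Nat.lt_of_succ_lt_succ hk),
        mul_zero, mul_zero, sub_zero]
  intro k j hk u hu
  exact key j u hu k hk
end

section
/- The Hasse–Schmidt derivation D̄(t) acts on the top exterior power by multiplication by det(id − f t): for every i with 0 ≤ i ≤ r, c_i(ι b_1 ∧ ι b_2 ∧ ⋯ ∧ ι b_r) = (−1)^i e_i • (ι b_1 ∧ ι b_2 ∧ ⋯ ∧ ι b_r), and c_i vanishes on ι b_1 ∧ ⋯ ∧ ι b_r for i > r. -/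
open ExteriorAlgebra

/-- Module-valued alternating maps on `Fin r → R` are determined by determinants. -/
lemma auxAltDet {R : Type*} [CommRing R] {N : Type*} [AddCommGroup N] [Module R N]
    {r : ℕ} (g : (Fin r → R) [⋀^Fin r]→ₗ[R] N) (v : Fin r → (Fin r → R)) :
    g v = (Matrix.of fun i j => v j i).det • g (Pi.basisFun R (Fin r)) := by
  set e := Pi.basisFun R (Fin r)
  have h : g = (LinearMap.toSpanSingleton R N (g e)).compAlternatingMap e.det := by
    refine e.ext_alternating fun w hw => ?_
    have hbij : Function.Bijective w := Finite.injective_iff_bijective.mp hw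
    let σ : Equiv.Perm (Fin r) := Equiv.ofBijective w hbij
    have h1 : (fun i => e (w i)) = ⇑e ∘ σ := rfl
    rw [h1, AlternatingMap.map_perm, LinearMap.compAlternatingMap_apply,
      AlternatingMap.map_perm, Module.Basis.det_self, Units.smul_def, Units.smul_def,
      map_zsmul, LinearMap.toSpanSingleton_apply_one]
  rw [h, LinearMap.compAlternatingMap_apply, LinearMap.toSpanSingleton_apply,
    Module.Basis.det_apply]
  have h2 : e.toMatrix v = Matrix.of fun i j => v j i := by
    ext i j
    simp [Module.Basis.toMatrix_apply, e]
  rw [h2]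
  simp [LinearMap.toSpanSingleton_apply, Module.Basis.det_self]

lemma auxProdDet {R S : Type*} [CommRing R] [Ring S] [Algebra R S] {r : ℕ}
    (u : Fin r → S) (hsq : ∀ j, u j * u j = 0)
    (hanti : ∀ j k, u j * u k + u k * u j = 0)
    (B : Matrix (Fin r) (Fin r) R) :
    (List.ofFn fun k => ∑ j, B j k • u j).prod = B.det • (List.ofFn u).prod := by
  let F : (Fin r → R) →ₗ[R] S :=
    { toFun := fun w => ∑ j, w j • u j
      map_add' := by intro w₁ w₂; simp [add_smul, Finset.sum_add_distrib]
      map_smul' := by intro c w; simp [smul_smul, Finset.smul_sum] }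
  have hFapply : ∀ w, F w = ∑ j, w j • u j := fun _ => rfl
  have hF : ∀ w, F w * F w = 0 := by
    intro w
    rw [hFapply, Finset.sum_mul_sum, ← Finset.sum_product']
    refine Finset.sum_involution (fun p _ => Prod.swap p) ?_ ?_ ?_ ?_
    · intro p _
      rw [smul_mul_assoc, smul_mul_assoc, mul_smul_comm, mul_smul_comm, smul_smul, smul_smul,
        Prod.fst_swap, Prod.snd_swap, mul_comm (w p.2) (w p.1), ← smul_add, hanti, smul_zero]
    · intro p _ hne hswap
      apply hne
      have h21 : p.2 = p.1 := congrArg Prod.fst hswap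
      rw [h21, smul_mul_assoc, mul_smul_comm, hsq, smul_zero, smul_zero]
    · intro p _; simp
    · intro p _; simp
  let L := ExteriorAlgebra.lift R ⟨F, hF⟩
  have key : ∀ v : Fin r → (Fin r → R),
      L (ιMulti R r v) = (List.ofFn fun k => F (v k)).prod := by
    intro v
    rw [ιMulti_apply, map_list_prod, List.map_ofFn]
    refine congrArg List.prod (congrArg List.ofFn (funext fun k => ?_))
    simp [L, Function.comp, ExteriorAlgebra.lift_ι_apply]
  let Φ := L.toLinearMap.compAlternatingMap (ιMulti R r)
  have hΦ : ∀ v, Φ v = (List.ofFn fun k => F (v k)).prod := fun v => key v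
  have h1 : Φ (fun k j => B j k) = B.det • Φ (Pi.basisFun R (Fin r)) := by
    rw [auxAltDet Φ (fun k j => B j k)]
    congr 1
  have h2 : Φ (Pi.basisFun R (Fin r)) = (List.ofFn u).prod := by
    rw [hΦ]
    refine congrArg List.prod (congrArg List.ofFn (funext fun k => ?_))
    rw [hFapply]
    simp [Pi.basisFun_apply, Pi.single_apply]
  have h3 : Φ (fun k j => B j k) = (List.ofFn fun k => ∑ j, B j k • u j).prod := hΦ _
  rw [← h3, h1, h2]

theorem stmt_8 (A : Type*) [CommRing A] (M : Type*) [AddCommGroup M] [Module A M]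
    (r : ℕ) (hr : 1 ≤ r) (b : Module.Basis (Fin r) A M) (f : Module.End A M)
    (e : ℕ → A) (he0 : e 0 = 1)
    (hchar : (LinearMap.toMatrix b b f).charpoly =
      ∑ i ∈ Finset.range (r + 1), (-1 : Polynomial A) ^ i * Polynomial.C (e i) * Polynomial.X ^ (r - i))
    (Dbar : ExteriorAlgebra A M →ₐ[A] PowerSeries (ExteriorAlgebra A M))
    (hDbar : ∀ m : M,
      Dbar (ι A m) = PowerSeries.C (ι A m) - PowerSeries.C (ι A (f m)) * PowerSeries.X) :
    (∀ i : ℕ, i ≤ r →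
      PowerSeries.coeff i (Dbar (List.ofFn fun k : Fin r => ι A (b k)).prod) =
        ((-1 : A) ^ i * e i) • (List.ofFn fun k : Fin r => ι A (b k)).prod) ∧
    (∀ i : ℕ, r < i →
      PowerSeries.coeff i (Dbar (List.ofFn fun k : Fin r => ι A (b k)).prod) = 0) := by
  rcases subsingleton_or_nontrivial A with hA | hA
  · haveI := Module.subsingleton A (ExteriorAlgebra A M)
    exact ⟨fun i _ => Subsingleton.elim _ _, fun i _ => Subsingleton.elim _ _⟩
  set E := ExteriorAlgebra A M with hE
  let φ : PowerSeries A →+* PowerSeries E := PowerSeries.map (algebraMap A E)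
  have hcomm : ∀ (p : PowerSeries A) (q : PowerSeries E), φ p * q = q * φ p := by
    intro p q
    ext n
    rw [PowerSeries.coeff_mul, PowerSeries.coeff_mul]
    conv_rhs => rw [← Finset.HasAntidiagonal.map_swap_antidiagonal, Finset.sum_map]
    refine Finset.sum_congr rfl fun x _ => ?_
    simp only [Function.Embedding.coeFn_mk, Prod.fst_swap, Prod.snd_swap, φ,
      PowerSeries.coeff_map]
    exact Algebra.commutes _ _
  letI : Algebra (PowerSeries A) (PowerSeries E) := φ.toAlgebra' hcomm
  have hsmul : ∀ (p : PowerSeries A) (q : PowerSeries E), p • q = φ p * q := fun p q => rfl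
  set a := LinearMap.toMatrix b b f with ha
  set B : Matrix (Fin r) (Fin r) (PowerSeries A) :=
    1 - (PowerSeries.X : PowerSeries A) • a.map (PowerSeries.C (R := A)) with hB
  set u : Fin r → PowerSeries E := fun k => PowerSeries.C (R := E) (ι A (b k)) with hu
  have hsq : ∀ j, u j * u j = 0 := by
    intro j
    show PowerSeries.C (R := E) (ι A (b j)) * PowerSeries.C (R := E) (ι A (b j)) = 0
    rw [← map_mul (PowerSeries.C (R := E)), ι_sq_zero, map_zero]
  have hanti : ∀ j k, u j * u k + u k * u j = 0 := by
    intro j k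
    show PowerSeries.C (R := E) (ι A (b j)) * PowerSeries.C (R := E) (ι A (b k))
      + PowerSeries.C (R := E) (ι A (b k)) * PowerSeries.C (R := E) (ι A (b j)) = 0
    rw [← map_mul (PowerSeries.C (R := E)), ← map_mul (PowerSeries.C (R := E)),
      ← map_add (PowerSeries.C (R := E)), ι_add_mul_swap, map_zero]
  have hfac : ∀ k, (∑ j, B j k • u j) = Dbar (ι A (b k)) := by
    intro k
    rw [hDbar]
    have hBjk : ∀ j, B j k = (1 : Matrix (Fin r) (Fin r) (PowerSeries A)) j k
        - PowerSeries.X * PowerSeries.C (R := A) (a j k) := by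
      intro j
      rw [hB, Matrix.sub_apply, Matrix.smul_apply, Matrix.map_apply, smul_eq_mul]
    have step1 : (∑ j, B j k • u j)
        = (∑ j, (1 : Matrix (Fin r) (Fin r) (PowerSeries A)) j k • u j)
          - ∑ j, (PowerSeries.X * PowerSeries.C (R := A) (a j k)) • u j := by
      rw [← Finset.sum_sub_distrib]
      refine Finset.sum_congr rfl fun j _ => ?_
      rw [hBjk j, sub_smul]
    have step2 : (∑ j, (1 : Matrix (Fin r) (Fin r) (PowerSeries A)) j k • u j) = u k := by
      simp [Matrix.one_apply, ite_smul]
    have step3 : (∑ j, (PowerSeries.X * PowerSeries.C (R := A) (a j k)) • u j)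
        = PowerSeries.X * PowerSeries.C (R := E) (ι A (f (b k))) := by
      have e1 : ∀ j, (PowerSeries.X * PowerSeries.C (R := A) (a j k)) • u j
          = PowerSeries.X * PowerSeries.C (R := E) (a j k • ι A (b j)) := by
        intro j
        rw [hsmul, map_mul, PowerSeries.map_X, PowerSeries.map_C, hu, mul_assoc,
          ← map_mul, ← Algebra.smul_def]
      rw [Finset.sum_congr rfl fun j _ => e1 j, ← Finset.mul_sum, ← map_sum]
      have e2 : (∑ j, a j k • b j) = f (b k) := by
        have h' : ∀ j, a j k = b.repr (f (b k)) j := fun j => LinearMap.toMatrix_apply b b f j k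
        rw [Finset.sum_congr rfl fun j _ => by rw [h' j]]
        exact b.sum_repr (f (b k))
      have e3 : ι A (f (b k)) = ∑ j, a j k • ι A (b j) := by
        rw [← e2, map_sum]
        exact Finset.sum_congr rfl fun j _ => map_smul (ι A) _ _
      rw [← e3]
    rw [step1, step2, step3, (PowerSeries.commute_X (PowerSeries.C (R := E) (ι A (f (b k))))).eq]
  have hmain : Dbar (List.ofFn fun k : Fin r => ι A (b k)).prod
      = φ B.det * PowerSeries.C (R := E) ((List.ofFn fun k : Fin r => ι A (b k)).prod) := by
    rw [map_list_prod, List.map_ofFn]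
    have h1 : List.ofFn (⇑Dbar ∘ fun k : Fin r => ι A (b k))
        = List.ofFn fun k => ∑ j, B j k • u j :=
      congrArg List.ofFn (funext fun k => (hfac k).symm)
    have h2 : PowerSeries.C (R := E) (List.ofFn fun k : Fin r => ι A (b k)).prod
        = (List.ofFn u).prod := by
      rw [map_list_prod, List.map_ofFn]
      rfl
    rw [h1, auxProdDet u hsq hanti B, hsmul, ← h2]
  have hdet : B.det = ((a.charpolyRev : Polynomial A) : PowerSeries A) := by
    have hmat : B = (1 - (Polynomial.X : Polynomial A) • a.map Polynomial.C).map
        Polynomial.coeToPowerSeries.ringHom := by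
      ext i j
      simp only [hB, Matrix.sub_apply, Matrix.smul_apply, Matrix.map_apply, smul_eq_mul,
        map_sub, map_mul, Polynomial.coeToPowerSeries.ringHom_apply, Polynomial.coe_X,
        Polynomial.coe_C, Matrix.one_apply]
      split <;> simp
    rw [hmat, ← RingHom.mapMatrix_apply, ← RingHom.map_det,
      Polynomial.coeToPowerSeries.ringHom_apply]
    rfl
  have hcoe : ∀ i, PowerSeries.coeff (R := A) i ((a.charpolyRev : Polynomial A) : PowerSeries A)
      = a.charpolyRev.coeff i := fun i => Polynomial.coeff_coe _ _
  have hq : a.charpolyRev = a.charpoly.reverse := (Matrix.reverse_charpoly a).symm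
  have hdeg : a.charpoly.natDegree = r := by
    rw [a.charpoly_natDegree_eq_dim, Fintype.card_fin]
  have hcoeff_le : ∀ i, i ≤ r → a.charpolyRev.coeff i = (-1 : A) ^ i * e i := by
    intro i hi
    rw [hq, Polynomial.coeff_reverse, hdeg, Polynomial.revAt_le hi, hchar,
      Polynomial.finset_sum_coeff]
    have hC : (-1 : Polynomial A) = Polynomial.C (-1 : A) := by simp
    rw [Finset.sum_eq_single i]
    · rw [hC, ← map_pow, ← map_mul, Polynomial.coeff_C_mul, Polynomial.coeff_X_pow,
        if_pos rfl, mul_one]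
    · intro i' hi' hne
      rw [hC, ← map_pow, ← map_mul, Polynomial.coeff_C_mul, Polynomial.coeff_X_pow,
        if_neg (by simp only [Finset.mem_range] at hi'; omega), mul_zero]
    · intro h
      exact absurd (Finset.mem_range.mpr (by omega)) h
  have hcoeff_gt : ∀ i, r < i → a.charpolyRev.coeff i = 0 := by
    intro i hi
    rw [hq]
    exact Polynomial.coeff_eq_zero_of_natDegree_lt
      (lt_of_le_of_lt (le_trans a.charpoly.reverse_natDegree_le (le_of_eq hdeg)) hi)
  constructor
  · intro i hi
    rw [hmain, PowerSeries.coeff_mul_C, PowerSeries.coeff_map, hdet, hcoe, hcoeff_le i hi,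
      ← Algebra.smul_def]
  · intro i hi
    rw [hmain, PowerSeries.coeff_mul_C, PowerSeries.coeff_map, hdet, hcoe, hcoeff_gt i hi,
      map_zero, zero_mul]
end

section
/- The Hasse–Schmidt derivation D(t) acts on the top exterior power by multiplication by the formal inverse of det(id − f t): for every j ≥ 0, D_j(ι b_1 ∧ ι b_2 ∧ ⋯ ∧ ι b_r) = h_j • (ι b_1 ∧ ι b_2 ∧ ⋯ ∧ ι b_r), where the elements h_j ∈ A are defined recursively by h_0 = 1 and h_j = ∑_{i=1}^{min(j,r)} (−1)^{i+1} e_i h_{j−i} for j ≥ 1 (so that ∑_{j≥0} h_j t^j is the multiplicative inverse in A[[t]] of ∑_{i=0}^r (−1)^i e_i t^i). -/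
open Finset ExteriorAlgebra

theorem coeff_ofFn_prod {S : Type*} [Semiring S] :
    ∀ (n : ℕ) (φ : Fin n → PowerSeries S) (j : ℕ),
    PowerSeries.coeff j (List.ofFn φ).prod
      = ∑ l ∈ Finset.Nat.antidiagonalTuple n j,
          (List.ofFn fun k => PowerSeries.coeff (l k) (φ k)).prod
  | 0, φ, j => by
    cases j with
    | zero => simp
    | succ j => simp [PowerSeries.coeff_one]
  | n+1, φ, j => by
    rw [List.ofFn_succ, List.prod_cons, PowerSeries.coeff_mul]
    have : ∀ p : ℕ × ℕ,
        PowerSeries.coeff p.1 (φ 0) *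
          PowerSeries.coeff p.2 (List.ofFn fun k : Fin n => φ k.succ).prod
        = ∑ l ∈ Finset.Nat.antidiagonalTuple n p.2,
            PowerSeries.coeff p.1 (φ 0) *
              (List.ofFn fun k : Fin n => PowerSeries.coeff (l k) (φ k.succ)).prod := by
      intro p
      rw [coeff_ofFn_prod n (fun k => φ k.succ) p.2, Finset.mul_sum]
    simp_rw [this]
    rw [Finset.sum_sigma']
    refine Finset.sum_nbij' (fun x => Fin.cons x.1.1 x.2)
      (fun l => ⟨(l 0, ∑ k : Fin n, l k.succ), Fin.tail l⟩) ?_ ?_ ?_ ?_ ?_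
    · rintro ⟨⟨p1, p2⟩, l⟩ hx
      simp only [Finset.mem_sigma, Finset.HasAntidiagonal.mem_antidiagonal,
        Finset.Nat.mem_antidiagonalTuple] at hx ⊢
      rw [Fin.sum_cons, hx.2, hx.1]
    · intro l hl
      simp only [Finset.Nat.mem_antidiagonalTuple, Finset.mem_sigma,
        Finset.HasAntidiagonal.mem_antidiagonal] at hl ⊢
      constructor
      · rw [← hl, Fin.sum_univ_succ]
      · rfl
    · rintro ⟨⟨p1, p2⟩, l⟩ hx
      simp only [Finset.mem_sigma, Finset.HasAntidiagonal.mem_antidiagonal,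
        Finset.Nat.mem_antidiagonalTuple] at hx
      have h0 : (Fin.cons p1 l : Fin (n+1) → ℕ) 0 = p1 := rfl
      have ht : Fin.tail (Fin.cons p1 l : Fin (n+1) → ℕ) = l := by funext k; simp [Fin.tail]
      refine Sigma.ext ?_ ?_
      · simp [h0, ht, hx.2]
      · simp [ht]
    · intro l hl
      exact Fin.cons_self_tail l
    · rintro ⟨⟨p1, p2⟩, l⟩ hx
      rw [List.ofFn_succ, List.prod_cons]
      simp


theorem alt_eq_det_smul {A : Type*} [CommRing A] {M : Type*} [AddCommGroup M] [Module A M]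
    {N : Type*} [AddCommGroup N] [Module A N] {r : ℕ} (b : Module.Basis (Fin r) A M)
    (g : M [⋀^Fin r]→ₗ[A] N) (v : Fin r → M) :
    g v = b.det v • g b := by
  have key : g = (LinearMap.toSpanSingleton A N (g b)).compAlternatingMap b.det := by
    refine b.ext_alternating fun i hi => ?_
    let σ : Equiv.Perm (Fin r) := Equiv.ofBijective i (Finite.injective_iff_bijective.1 hi)
    have hi' : (fun k => b (i k)) = (b : Fin r → M) ∘ σ := rfl
    rw [hi', g.map_perm, LinearMap.compAlternatingMap_apply, b.det.map_perm]
    simp only [LinearMap.toSpanSingleton_apply, Module.Basis.det_self, smul_eq_mul, mul_one]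
    rcases Int.units_eq_one_or (Equiv.Perm.sign σ) with h | h <;> simp [h]
  conv_lhs => rw [key]
  simp [LinearMap.toSpanSingleton_apply]


theorem charpolyRev_mul_detG {A : Type*} [CommRing A] {r : ℕ} (F : Matrix (Fin r) (Fin r) A) :
    ((F.charpolyRev : Polynomial A) : PowerSeries A) *
      (Matrix.of fun p q => PowerSeries.mk fun i => (F ^ i) p q).det = 1 := by
  set G : Matrix (Fin r) (Fin r) (PowerSeries A) :=
    Matrix.of fun p q => PowerSeries.mk fun i => (F ^ i) p q with hG
  have hM : (1 - (PowerSeries.X : PowerSeries A) • F.map (PowerSeries.C)) * G = 1 := by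
    ext p q j
    rw [Matrix.sub_mul, Matrix.one_mul, Matrix.sub_apply, Matrix.mul_apply]
    simp only [map_sub, hG, Matrix.of_apply, PowerSeries.coeff_mk, Matrix.smul_apply,
      Matrix.map_apply, smul_eq_mul, map_sum]
    cases j with
    | zero =>
      have : ∀ s, (PowerSeries.coeff 0) ((PowerSeries.X * PowerSeries.C (F p s)) *
          PowerSeries.mk fun i => (F ^ i) s q) = 0 := by
        intro s
        rw [mul_assoc, PowerSeries.coeff_zero_eq_constantCoeff, map_mul]
        simp
      simp only [this, Finset.sum_const_zero, sub_zero, pow_zero, Matrix.one_apply,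
        PowerSeries.coeff_zero_eq_constantCoeff]
      simp only [Matrix.one_apply, apply_ite]
      split <;> simp_all
    | succ j =>
      have : ∀ s, (PowerSeries.coeff (j+1)) ((PowerSeries.X * PowerSeries.C (F p s)) *
          PowerSeries.mk fun i => (F ^ i) s q) = F p s * (F ^ j) s q := by
        intro s
        rw [mul_assoc, PowerSeries.coeff_succ_X_mul, PowerSeries.coeff_C_mul,
          PowerSeries.coeff_mk]
      simp only [this]
      have hone : (PowerSeries.coeff (j+1)) ((1 : Matrix (Fin r) (Fin r) (PowerSeries A)) p q)
          = 0 := by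
        simp [Matrix.one_apply, apply_ite, PowerSeries.coeff_one]
      rw [hone, pow_succ']
      rw [Matrix.mul_apply]
      simp
  have hdet := congrArg Matrix.det hM
  rw [Matrix.det_mul, Matrix.det_one] at hdet
  have hcoe : ((F.charpolyRev : Polynomial A) : PowerSeries A)
      = (1 - (PowerSeries.X : PowerSeries A) • F.map (PowerSeries.C)).det := by
    rw [Matrix.charpolyRev, ← Polynomial.coeToPowerSeries.ringHom_apply,
      RingHom.map_det]
    congr 1
    refine Matrix.ext fun p q => ?_
    rw [RingHom.mapMatrix_apply, Matrix.map_apply, Matrix.sub_apply, Matrix.sub_apply, Matrix.smul_apply,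
      Matrix.smul_apply, Matrix.map_apply, Matrix.map_apply, smul_eq_mul, smul_eq_mul,
      map_sub, map_mul]
    congr 1
    · rcases eq_or_ne p q with rfl | hpq
      · rw [Matrix.one_apply_eq, Matrix.one_apply_eq, map_one]
      · rw [Matrix.one_apply_ne hpq, Matrix.one_apply_ne hpq, map_zero]
    · rw [Polynomial.coeToPowerSeries.ringHom_apply, Polynomial.coeToPowerSeries.ringHom_apply,
        Polynomial.coe_X, Polynomial.coe_C]
  rw [hcoe]
  exact hdet


theorem c_rec {A : Type*} [CommRing A] [Nontrivial A] {r : ℕ} (hr : 1 ≤ r)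
    (F : Matrix (Fin r) (Fin r) A) (e : ℕ → A) (he0 : e 0 = 1)
    (hchar : F.charpoly =
      ∑ i ∈ Finset.range (r + 1), (-1 : Polynomial A) ^ i * Polynomial.C (e i) *
        Polynomial.X ^ (r - i))
    (hmulone : ((F.charpolyRev : Polynomial A) : PowerSeries A) *
      (Matrix.of fun p q => PowerSeries.mk fun i => (F ^ i) p q).det = 1)
    (c : ℕ → A)
    (hc : ∀ j, c j = PowerSeries.coeff j
      (Matrix.of fun p q => PowerSeries.mk fun i => (F ^ i) p q).det) :
    c 0 = 1 ∧ ∀ j, 1 ≤ j →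
      c j = ∑ i ∈ Finset.Icc 1 (min j r), (-1 : A) ^ (i + 1) * e i * c (j - i) := by
  have hdeg : F.charpoly.natDegree = r := by
    rw [Matrix.charpoly_natDegree_eq_dim, Fintype.card_fin]
  have hcoeff : ∀ n, F.charpoly.coeff (r - n) = (-1 : A) ^ n * e n → True := fun _ _ => trivial
  have hP : ∀ n : ℕ, (F.charpoly.reverse).coeff n = if n ≤ r then (-1 : A) ^ n * e n else 0 := by
    intro n
    rw [Polynomial.coeff_reverse, hdeg]
    by_cases hn : n ≤ r
    · rw [Polynomial.revAt_le hn, if_pos hn, hchar]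
      rw [Polynomial.finset_sum_coeff]
      have hC : (-1 : Polynomial A) = Polynomial.C (-1) := by simp
      rw [Finset.sum_eq_single n]
      · rw [hC, ← Polynomial.C_pow, mul_assoc, Polynomial.coeff_C_mul, Polynomial.coeff_C_mul,
          Polynomial.coeff_X_pow, if_pos rfl, mul_one, mul_comm ((-1 : A) ^ n), mul_comm]
      · intro i hi hne
        rw [hC, ← Polynomial.C_pow, mul_assoc, Polynomial.coeff_C_mul, Polynomial.coeff_C_mul,
          Polynomial.coeff_X_pow]
        rw [Finset.mem_range] at hi
        have : ¬ (r - n = r - i) := by omega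
        rw [if_neg this]
        simp
      · intro hn'
        exact absurd (Finset.mem_range.2 (by omega)) hn'
    · rw [if_neg hn]
      have h1 : Polynomial.revAt r n = n := Polynomial.revAt_eq_self_of_lt (by omega)
      rw [h1]
      exact Polynomial.coeff_eq_zero_of_natDegree_lt (by omega)
  rw [Matrix.reverse_charpoly] at hP
  have hco : ∀ n : ℕ, PowerSeries.coeff n ((F.charpolyRev : Polynomial A) : PowerSeries A)
      = if n ≤ r then (-1 : A) ^ n * e n else 0 := by
    intro n; rw [Polynomial.coeff_coe]; exact hP n
  have key : ∀ j : ℕ, PowerSeries.coeff j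
      (((F.charpolyRev : Polynomial A) : PowerSeries A) *
        (Matrix.of fun p q => PowerSeries.mk fun i => (F ^ i) p q).det)
      = ∑ i ∈ Finset.range (j + 1), (if i ≤ r then (-1 : A) ^ i * e i else 0) * c (j - i) := by
    intro j
    rw [PowerSeries.coeff_mul, Finset.Nat.sum_antidiagonal_eq_sum_range_succ_mk]
    exact Finset.sum_congr rfl fun i _ => by rw [hco, hc]
  constructor
  · have := key 0
    rw [hmulone, PowerSeries.coeff_one, if_pos rfl] at this
    simpa [he0] using this.symm
  · intro j hj
    have hk := key j
    rw [hmulone, PowerSeries.coeff_one, if_neg (by omega)] at hk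
    have hk2 : (0 : A) = ∑ i ∈ Finset.range (min j r + 1), (-1 : A) ^ i * e i * c (j - i) := by
      rw [hk]
      rw [← Finset.sum_subset (Finset.range_subset_range.2 (by omega : min j r + 1 ≤ j + 1))]
      · exact Finset.sum_congr rfl fun i hi => by
          rw [Finset.mem_range] at hi
          rw [if_pos (by omega)]
      · intro x hx hx'
        rw [Finset.mem_range] at hx
        rw [Finset.mem_range, not_lt] at hx'
        rw [if_neg (by omega), zero_mul]
    rw [Finset.sum_range_succ'] at hk2
    simp only [pow_zero, he0, one_mul, Nat.sub_zero] at hk2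
    have : c j = - ∑ i ∈ Finset.range (min j r), (-1 : A) ^ (i + 1) * e (i + 1) * c (j - (i + 1)) := by
      rw [eq_neg_iff_add_eq_zero, add_comm]
      exact hk2.symm
    rw [this, ← Finset.Ico_add_one_right_eq_Icc, Finset.sum_Ico_eq_sum_range, ← Finset.sum_neg_distrib]
    have hmm : j ⊓ r + 1 - 1 = j ⊓ r := by omega
    rw [hmm]
    refine Finset.sum_congr rfl fun i hi => ?_
    have h1 : 1 + i = i + 1 := by rw [Nat.add_comm]
    rw [h1]
    ring


theorem stmt_9 (A : Type*) [CommRing A] (M : Type*) [AddCommGroup M] [Module A M]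
    (r : ℕ) (hr : 1 ≤ r) (b : Module.Basis (Fin r) A M) (f : Module.End A M)
    (e : ℕ → A) (he0 : e 0 = 1)
    (hchar : (LinearMap.toMatrix b b f).charpoly =
      ∑ i ∈ Finset.range (r + 1), (-1 : Polynomial A) ^ i * Polynomial.C (e i) * Polynomial.X ^ (r - i))
    (h : ℕ → A) (hh0 : h 0 = 1)
    (hhrec : ∀ j : ℕ, 1 ≤ j →
      h j = ∑ i ∈ Finset.Icc 1 (min j r), (-1 : A) ^ (i + 1) * e i * h (j - i))
    (D : ExteriorAlgebra A M →ₐ[A] PowerSeries (ExteriorAlgebra A M))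
    (hD : ∀ m : M, D (ι A m) = PowerSeries.mk fun i => ι A ((f ^ i) m)) :
    ∀ j : ℕ,
      PowerSeries.coeff j (D (List.ofFn fun k : Fin r => ι A (b k)).prod) =
        h j • (List.ofFn fun k : Fin r => ι A (b k)).prod := by
  rcases subsingleton_or_nontrivial A with hA | hA
  · haveI := Module.subsingleton A (ExteriorAlgebra A M)
    intro j
    exact Subsingleton.elim _ _
  classical
  set F : Matrix (Fin r) (Fin r) A := LinearMap.toMatrix b b f with hF
  set G : Matrix (Fin r) (Fin r) (PowerSeries A) :=
    Matrix.of fun p q => PowerSeries.mk fun i => (F ^ i) p q with hGdef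
  set c : ℕ → A := fun j => PowerSeries.coeff j G.det with hcdef
  -- step 1 : compute coefficients of D ω
  have hDω : ∀ j, PowerSeries.coeff j (D (List.ofFn fun k : Fin r => ι A (b k)).prod)
      = (∑ l ∈ Finset.Nat.antidiagonalTuple r j,
          (Matrix.of fun p k : Fin r => ((F ^ (l k)) p k)).det)
        • (List.ofFn fun k : Fin r => ι A (b k)).prod := by
    intro j
    have h1 : D (List.ofFn fun k : Fin r => ι A (b k)).prod
        = (List.ofFn fun k : Fin r => PowerSeries.mk fun i =>
            ι A ((f ^ i) (b k))).prod := by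
      rw [map_list_prod, List.map_ofFn]
      exact congrArg List.prod (congrArg List.ofFn (funext fun k => hD (b k)))
    rw [h1, coeff_ofFn_prod]
    have h2 : ∀ l : Fin r → ℕ,
        (List.ofFn fun k => PowerSeries.coeff (l k)
          (PowerSeries.mk fun i => ι A ((f ^ i) (b k)))).prod
        = (Matrix.of fun p k : Fin r => ((F ^ (l k)) p k)).det
            • (List.ofFn fun k : Fin r => ι A (b k)).prod := by
      intro l
      simp only [PowerSeries.coeff_mk]
      rw [← ExteriorAlgebra.ιMulti_apply, alt_eq_det_smul b (ιMulti A r),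
        ExteriorAlgebra.ιMulti_apply]
      congr 1
      rw [Module.Basis.det_apply]
      congr 1
      ext p k
      rw [Module.Basis.toMatrix_apply, Matrix.of_apply, hF, LinearMap.toMatrix_pow,
        LinearMap.toMatrix_apply]
    rw [Finset.sum_congr rfl fun l _ => h2 l, ← Finset.sum_smul]
  -- step 2 : compute coefficients of det G
  have hcj : ∀ j, c j = ∑ l ∈ Finset.Nat.antidiagonalTuple r j,
      (Matrix.of fun p k : Fin r => ((F ^ (l k)) p k)).det := by
    intro j
    rw [hcdef]
    simp only
    rw [Matrix.det_apply', map_sum]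
    have hσ : ∀ σ : Equiv.Perm (Fin r),
        PowerSeries.coeff j ((((Equiv.Perm.sign σ : ℤ) : PowerSeries A)) * ∏ k, G (σ k) k)
        = ∑ l ∈ Finset.Nat.antidiagonalTuple r j,
            ((Equiv.Perm.sign σ : ℤ) : A) * ∏ k, (F ^ (l k)) (σ k) k := by
      intro σ
      have hl : ∏ k, G (σ k) k = (List.ofFn fun k => G (σ k) k).prod :=
        (List.prod_ofFn).symm
      rw [hl, ← zsmul_eq_mul, map_zsmul, coeff_ofFn_prod, Finset.smul_sum]
      refine Finset.sum_congr rfl fun l _ => ?_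
      rw [zsmul_eq_mul]
      congr 1
      rw [List.prod_ofFn]
      refine Finset.prod_congr rfl fun k _ => ?_
      exact PowerSeries.coeff_mk (l k) (fun i => (F ^ i) (σ k) k)
    rw [Finset.sum_congr rfl fun σ _ => hσ σ, Finset.sum_comm]
    refine Finset.sum_congr rfl fun l _ => ?_
    rw [Matrix.det_apply']
    exact Finset.sum_congr rfl fun σ _ => rfl
  -- step 3 : the recursion for c
  have hrec := c_rec hr F e he0 hchar (charpolyRev_mul_detG F) c (fun j => rfl)
  -- step 4 : c = h by strong induction
  have hch : ∀ j, c j = h j := by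
    intro j
    induction j using Nat.strong_induction_on with
    | _ j ih =>
      rcases Nat.eq_zero_or_pos j with rfl | hj
      · rw [hrec.1, hh0]
      · rw [hrec.2 j hj, hhrec j hj]
        refine Finset.sum_congr rfl fun i hi => ?_
        rw [Finset.mem_Icc] at hi
        rw [ih (j - i) (by omega)]
  intro j
  rw [hDω j, ← hcj j, hch j]
end

section
/- Fix r ≥ 1. For every n ∈ ℕ and every η ∈ ⋀^{r−1}V, one has ∑_{k=0}^{r} c_k( ι(σ^{r−k} b_n) ∧ η ) = 0. (This is the linear recurrence b_{n+r} − e_1 b_{n+r−1} + ⋯ + (−1)^r e_r b_n = 0 expressing that V, with the multiplication by e_1, …, e_r induced through the top exterior power, is generated over ℚ[e_1,…,e_r] by b_0, …, b_{r−1}.) -/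
open ExteriorAlgebra

lemma aux_coeff_vanish
    (S : ExteriorAlgebra ℚ (ℕ →₀ ℚ) →ₐ[ℚ] PowerSeries (ExteriorAlgebra ℚ (ℕ →₀ ℚ)))
    (σ : Module.End ℚ (ℕ →₀ ℚ))
    (hS : ∀ m : ℕ →₀ ℚ,
      S (ι ℚ m) = PowerSeries.C (ι ℚ m) - PowerSeries.C (ι ℚ (σ m)) * PowerSeries.X)
    (p : ℕ) (η : ExteriorAlgebra ℚ (ℕ →₀ ℚ))
    (hη : η ∈ (LinearMap.range
        (ι ℚ : (ℕ →₀ ℚ) →ₗ[ℚ] ExteriorAlgebra ℚ (ℕ →₀ ℚ))) ^ p) :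
    ∀ j, p < j → PowerSeries.coeff j (S η) = 0 := by
  induction hη using Submodule.pow_induction_on_left' with
  | algebraMap q =>
    intro j hj
    rw [AlgHom.commutes]
    rw [PowerSeries.algebraMap_apply, PowerSeries.coeff_C, if_neg (by omega)]
  | add x y i hx hy ihx ihy =>
    intro j hj
    rw [map_add, map_add, ihx j hj, ihy j hj, add_zero]
  | mem_mul m hm i x hx ih =>
    intro j hj
    obtain ⟨v, rfl⟩ := hm
    rw [map_mul, hS, sub_mul, map_sub]
    have h1 : PowerSeries.coeff j (PowerSeries.C (ι ℚ v) * S x)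
        = ι ℚ v * PowerSeries.coeff j (S x) := PowerSeries.coeff_C_mul ..
    have h2 : PowerSeries.coeff j (PowerSeries.C (ι ℚ (σ v)) * PowerSeries.X * S x)
        = ι ℚ (σ v) * PowerSeries.coeff j (PowerSeries.X * S x) := by
      rw [mul_assoc]; exact PowerSeries.coeff_C_mul ..
    obtain ⟨j, rfl⟩ : ∃ j', j = j' + 1 := ⟨j - 1, by omega⟩
    rw [h1, h2, PowerSeries.coeff_succ_X_mul, ih j (by omega), ih (j + 1) (by omega),
      mul_zero, mul_zero, sub_zero]

theorem stmt_15 (r : ℕ) (hr : 1 ≤ r)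
    (σ : Module.End ℚ (ℕ →₀ ℚ))
    (hσ : ∀ n : ℕ, σ (Finsupp.single n 1) = Finsupp.single (n + 1) 1)
    (S : ExteriorAlgebra ℚ (ℕ →₀ ℚ) →ₐ[ℚ] PowerSeries (ExteriorAlgebra ℚ (ℕ →₀ ℚ)))
    (hS : ∀ m : ℕ →₀ ℚ,
      S (ι ℚ m) = PowerSeries.C (ι ℚ m) - PowerSeries.C (ι ℚ (σ m)) * PowerSeries.X) :
    ∀ n : ℕ,
      ∀ η ∈ (LinearMap.range
          (ι ℚ : (ℕ →₀ ℚ) →ₗ[ℚ] ExteriorAlgebra ℚ (ℕ →₀ ℚ))) ^ (r - 1),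
        ∑ k ∈ Finset.range (r + 1),
          PowerSeries.coeff k (S (ι ℚ ((σ ^ (r - k)) (Finsupp.single n 1)) * η)) = 0 := by
  intro n η hη
  set bn : ℕ →₀ ℚ := Finsupp.single n 1 with hbn
  set T : ℕ → ExteriorAlgebra ℚ (ℕ →₀ ℚ) :=
    fun k => ι ℚ ((σ ^ (r - k)) bn) * PowerSeries.coeff k (S η) with hT
  have key : ∀ k ∈ Finset.range (r + 1),
      PowerSeries.coeff k (S (ι ℚ ((σ ^ (r - k)) bn) * η))
        = T k - (if k = 0 then 0 else T (k - 1)) := by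
    intro k hk
    rw [Finset.mem_range] at hk
    rw [map_mul, hS, sub_mul, map_sub]
    have h1 : PowerSeries.coeff k (PowerSeries.C (ι ℚ ((σ ^ (r - k)) bn)) * S η)
        = ι ℚ ((σ ^ (r - k)) bn) * PowerSeries.coeff k (S η) := PowerSeries.coeff_C_mul ..
    have h2 : PowerSeries.coeff k
          (PowerSeries.C (ι ℚ (σ ((σ ^ (r - k)) bn))) * PowerSeries.X * S η)
        = ι ℚ (σ ((σ ^ (r - k)) bn)) * PowerSeries.coeff k (PowerSeries.X * S η) := by
      rw [mul_assoc]; exact PowerSeries.coeff_C_mul ..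
    rw [h1, h2]
    rcases Nat.eq_zero_or_pos k with rfl | hk0
    · rw [if_pos rfl, PowerSeries.coeff_zero_X_mul, mul_zero, sub_zero]
    · rw [if_neg (by omega)]
      obtain ⟨k, rfl⟩ : ∃ k', k = k' + 1 := ⟨k - 1, by omega⟩
      rw [PowerSeries.coeff_succ_X_mul, hT]
      simp only [Nat.add_sub_cancel]
      have : σ ((σ ^ (r - (k + 1))) bn) = (σ ^ (r - k)) bn := by
        have : r - k = (r - (k + 1)) + 1 := by omega
        rw [this, pow_succ']
        rfl
      rw [this]
  rw [Finset.sum_congr rfl key]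
  have split : ∑ k ∈ Finset.range (r + 1), (T k - if k = 0 then 0 else T (k - 1))
      = (∑ i ∈ Finset.range r, (T (i + 1) - T i)) + T 0 := by
    rw [Finset.sum_range_succ' (fun k => T k - if k = 0 then 0 else T (k - 1)) r]
    simp
  have hTr : T r = 0 := by
    simp only [hT, Nat.sub_self]
    rw [aux_coeff_vanish S σ hS (r - 1) η hη r (by omega), mul_zero]
  rw [split, Finset.sum_range_sub T r, hTr, zero_sub, neg_add_cancel]
end

section
/- Fix r ≥ 1 and i with 1 ≤ i ≤ r. If m, m′ ∈ V satisfy ι m′ ∧ η = c_i(ι m ∧ η) for all η ∈ ⋀^{r−1}V, then also ι(σ m′) ∧ η = c_i(ι(σ m) ∧ η) for all η ∈ ⋀^{r−1}V. (That is, the shift σ commutes with the multiplication-by-e_i structure induced on V through the top exterior power, so σ is ℚ[e_1,…,e_r]-linear.) -/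
open ExteriorAlgebra

namespace Stmt16Aux

open PowerSeries

variable {A : Type*} [Ring A] [Algebra ℚ A]

noncomputable def swapPS (f : A⟦X⟧⟦X⟧) : A⟦X⟧⟦X⟧ :=
  PowerSeries.mk fun n => PowerSeries.mk fun m => coeff (R := A) n (coeff (R := A⟦X⟧) m f)

@[simp] lemma coeff_swapPS (n m : ℕ) (f : A⟦X⟧⟦X⟧) :
    coeff (R := A) m (coeff (R := A⟦X⟧) n (swapPS f)) = coeff (R := A) n (coeff (R := A⟦X⟧) m f) := by
  simp [swapPS]

lemma swapPS_mul (f g : A⟦X⟧⟦X⟧) : swapPS (f * g) = swapPS f * swapPS g := by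
  refine PowerSeries.ext fun n => PowerSeries.ext fun m => ?_
  rw [coeff_swapPS, coeff_mul, map_sum, coeff_mul]
  have h1 : ∀ p ∈ Finset.HasAntidiagonal.antidiagonal m, coeff (R := A) n ((coeff (R := A⟦X⟧) p.1 f) * (coeff (R := A⟦X⟧) p.2 g))
      = ∑ q ∈ Finset.HasAntidiagonal.antidiagonal n, coeff (R := A) q.1 (coeff (R := A⟦X⟧) p.1 f) * coeff (R := A) q.2 (coeff (R := A⟦X⟧) p.2 g) :=
    fun p _ => coeff_mul ..
  have h2 : ∀ q ∈ Finset.HasAntidiagonal.antidiagonal n, coeff (R := A) m ((coeff (R := A⟦X⟧) q.1 (swapPS f)) * (coeff (R := A⟦X⟧) q.2 (swapPS g)))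
      = ∑ p ∈ Finset.HasAntidiagonal.antidiagonal m, coeff (R := A) q.1 (coeff (R := A⟦X⟧) p.1 f) * coeff (R := A) q.2 (coeff (R := A⟦X⟧) p.2 g) := by
    intro q _
    rw [coeff_mul]
    exact Finset.sum_congr rfl fun p _ => by rw [coeff_swapPS, coeff_swapPS]
  rw [Finset.sum_congr rfl h1, map_sum, Finset.sum_congr rfl h2, Finset.sum_comm]

lemma swapPS_CC (x : A) : swapPS (C (R := A⟦X⟧) (C (R := A) x)) = C (R := A⟦X⟧) (C (R := A) x) := by
  refine PowerSeries.ext fun n => PowerSeries.ext fun m => ?_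
  rw [coeff_swapPS]
  simp only [coeff_C, apply_ite (coeff (R := A) m), apply_ite (coeff (R := A) n), map_zero]
  split_ifs <;> simp_all

lemma swapPS_X : swapPS (X : A⟦X⟧⟦X⟧) = C (R := A⟦X⟧) X := by
  refine PowerSeries.ext fun n => PowerSeries.ext fun m => ?_
  rw [coeff_swapPS]
  simp only [coeff_X, coeff_C, apply_ite (coeff (R := A) m), apply_ite (coeff (R := A) n), map_zero,
    coeff_one]
  split_ifs <;> simp_all

lemma swapPS_CX : swapPS (C (R := A⟦X⟧) (X : A⟦X⟧)) = X := by
  refine PowerSeries.ext fun n => PowerSeries.ext fun m => ?_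
  rw [coeff_swapPS]
  simp only [coeff_X, coeff_C, apply_ite (coeff (R := A) m), apply_ite (coeff (R := A) n), map_zero,
    coeff_one]
  split_ifs <;> simp_all

lemma swapPS_add (f g : A⟦X⟧⟦X⟧) : swapPS (f + g) = swapPS f + swapPS g := by
  refine PowerSeries.ext fun n => PowerSeries.ext fun m => ?_
  simp [coeff_swapPS]

lemma swapPS_one : swapPS (1 : A⟦X⟧⟦X⟧) = 1 := by
  refine PowerSeries.ext fun n => PowerSeries.ext fun m => ?_
  rw [coeff_swapPS]
  simp only [coeff_one, apply_ite (coeff (R := A) m), apply_ite (coeff (R := A) n), map_zero]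
  split_ifs <;> simp_all

lemma swap_special (a b c : A) :
    swapPS (C (R := A⟦X⟧) (C (R := A) a - C (R := A) b * X) - C (R := A⟦X⟧) (C (R := A) b - C (R := A) c * X) * X)
      = C (R := A⟦X⟧) (C (R := A) a - C (R := A) b * X) - C (R := A⟦X⟧) (C (R := A) b - C (R := A) c * X) * X := by
  refine PowerSeries.ext fun n => PowerSeries.ext fun m => ?_
  rw [coeff_swapPS]
  rcases n with _|_|n <;> rcases m with _|_|m <;>
    simp [coeff_C, coeff_zero_mul_X, coeff_succ_mul_X]

/-- `swapPS` as an algebra homomorphism. -/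
noncomputable def swapAlg : A⟦X⟧⟦X⟧ →ₐ[ℚ] A⟦X⟧⟦X⟧ where
  toFun := swapPS
  map_one' := swapPS_one
  map_mul' := swapPS_mul
  map_zero' := by
    refine PowerSeries.ext fun n => PowerSeries.ext fun m => ?_
    simp [coeff_swapPS]
  map_add' := swapPS_add
  commutes' := fun q => by
    show swapPS ((algebraMap ℚ A⟦X⟧⟦X⟧) q) = (algebraMap ℚ A⟦X⟧⟦X⟧) q
    rw [PowerSeries.algebraMap_apply, PowerSeries.algebraMap_apply, swapPS_CC]

@[simp] lemma swapAlg_apply (f : A⟦X⟧⟦X⟧) : swapAlg f = swapPS f := rfl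

end Stmt16Aux

section Main

open PowerSeries Stmt16Aux

local notation "E" => ExteriorAlgebra ℚ (ℕ →₀ ℚ)

variable (σ : Module.End ℚ (ℕ →₀ ℚ)) (S : E →ₐ[ℚ] PowerSeries E)

/-- map `S` coefficientwise, as an algebra hom. -/
noncomputable def mapSAlg : PowerSeries E →ₐ[ℚ] PowerSeries (PowerSeries E) :=
  { PowerSeries.map (S.toRingHom) with
    commutes' := fun q => by
      show PowerSeries.map S.toRingHom (algebraMap ℚ (PowerSeries E) q) = _
      rw [PowerSeries.algebraMap_apply, PowerSeries.map_C]
      show C (S (algebraMap ℚ E q)) = _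
      rw [AlgHom.commutes]
      rw [show (algebraMap ℚ E⟦X⟧⟦X⟧) q = C ((algebraMap ℚ E⟦X⟧) q) from
        PowerSeries.algebraMap_apply] }

@[simp] lemma mapSAlg_apply (f : PowerSeries E) :
    mapSAlg S f = PowerSeries.map S.toRingHom f := rfl

variable (hS : ∀ m : ℕ →₀ ℚ,
    S (ι ℚ m) = PowerSeries.C (ι ℚ m) - PowerSeries.C (ι ℚ (σ m)) * PowerSeries.X)

include hS

lemma coeff_zero_S (u : E) : coeff (R := E) 0 (S u) = u := by
  induction u using ExteriorAlgebra.induction with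
  | algebraMap r =>
    rw [AlgHom.commutes, PowerSeries.algebraMap_apply, coeff_zero_C]
  | ι v =>
    rw [hS, map_sub, coeff_zero_C, coeff_zero_mul_X, sub_zero]
  | mul a b ha hb =>
    simp only [coeff_zero_eq_constantCoeff] at ha hb ⊢
    rw [map_mul, map_mul, ha, hb]
  | add a b ha hb => rw [map_add, map_add, ha, hb]

lemma coeff_S_mem (p : ℕ) (η : E)
    (hη : η ∈ (LinearMap.range (ι ℚ : (ℕ →₀ ℚ) →ₗ[ℚ] E)) ^ p) (j : ℕ) :
    coeff (R := E) j (S η) ∈ (LinearMap.range (ι ℚ : (ℕ →₀ ℚ) →ₗ[ℚ] E)) ^ p := by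
  induction p generalizing η j with
  | zero =>
    rw [pow_zero] at *
    obtain ⟨q, hq⟩ := Submodule.mem_one.mp hη
    rw [← hq, AlgHom.commutes, PowerSeries.algebraMap_apply, coeff_C]
    split_ifs with hj
    · exact Submodule.mem_one.mpr ⟨q, rfl⟩
    · exact zero_mem _
  | succ p ih =>
    rw [pow_succ] at *
    refine Submodule.mul_induction_on hη (fun a ha b hb => ?_) (fun x y hx hy => ?_)
    · obtain ⟨v, hv⟩ := hb
      rw [map_mul, ← hv, hS, mul_sub, map_sub]
      refine sub_mem ?_ ?_
      · rw [coeff_mul_C]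
        exact Submodule.mul_mem_mul (ih a ha j) (LinearMap.mem_range_self _ v)
      · rw [← mul_assoc]
        cases j with
        | zero => rw [coeff_zero_mul_X]; exact zero_mem _
        | succ j =>
          rw [coeff_succ_mul_X, coeff_mul_C]
          exact Submodule.mul_mem_mul (ih a ha _) (LinearMap.mem_range_self _ (σ v))
    · rw [map_add, map_add]
      exact add_mem hx hy

set_option maxHeartbeats 1000000 in
lemma swap_comm_S (u : E) (n m : ℕ) :
    coeff (R := E) m (S (coeff (R := E) n (S u))) = coeff (R := E) n (S (coeff (R := E) m (S u))) := by
  have key : ∀ w : E, swapPS ((mapSAlg S) (S w)) = (mapSAlg S) (S w) := by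
    intro w
    induction w using ExteriorAlgebra.induction with
    | algebraMap r =>
      rw [AlgHom.commutes, AlgHom.commutes, ← swapAlg_apply, AlgHom.commutes]
    | mul a b ha hb => rw [map_mul, map_mul, swapPS_mul, ha, hb]
    | add a b ha hb => rw [map_add, map_add, swapPS_add, ha, hb]
    | ι v =>
      have hmap : (mapSAlg S) (S (ι ℚ v)) =
          C (C (R := E) (ι ℚ v) - C (R := E) (ι ℚ (σ v)) * X)
            - C (C (R := E) (ι ℚ (σ v)) - C (R := E) (ι ℚ (σ (σ v))) * X) * X := by
        rw [mapSAlg_apply, hS, map_sub, PowerSeries.map_C, map_mul, PowerSeries.map_C,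
          PowerSeries.map_X]
        show C (S (ι ℚ v)) - C (S (ι ℚ (σ v))) * X = _
        rw [hS, hS]
      rw [hmap, swap_special]
  have hc : ∀ (k : ℕ) (w : E),
      coeff (R := PowerSeries E) k (((mapSAlg S).comp S) w) = S (coeff (R := E) k (S w)) := by
    intro k w
    rw [AlgHom.comp_apply, mapSAlg_apply, PowerSeries.coeff_map]
    rfl
  have keyu : swapPS (((mapSAlg S).comp S) u) = ((mapSAlg S).comp S) u := key u
  calc coeff (R := E) m (S (coeff (R := E) n (S u)))
      = coeff (R := E) m (coeff (R := PowerSeries E) n (((mapSAlg S).comp S) u)) := by rw [hc]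
    _ = coeff (R := E) m (coeff (R := PowerSeries E) n (swapPS (((mapSAlg S).comp S) u))) := by rw [keyu]
    _ = coeff (R := E) n (coeff (R := PowerSeries E) m (((mapSAlg S).comp S) u)) := coeff_swapPS ..
    _ = coeff (R := E) n (S (coeff (R := E) m (S u))) := by rw [hc]

lemma key_A (v : ℕ →₀ ℚ) (w : E) :
    ι ℚ (σ v) * w = ι ℚ v * coeff (R := E) 1 (S w) - coeff (R := E) 1 (S (ι ℚ v * w)) := by
  have hc : coeff (R := E) 1 (S (ι ℚ v * w)) = ι ℚ v * coeff (R := E) 1 (S w) - ι ℚ (σ v) * w := by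
    rw [map_mul, hS, sub_mul, map_sub, coeff_C_mul, mul_assoc, coeff_C_mul,
      show (1 : ℕ) = 0 + 1 from rfl, coeff_succ_X_mul, coeff_zero_S σ S hS]
  rw [hc, sub_sub_cancel]

end Main

open Stmt16Aux in
theorem stmt_16 (r : ℕ) (hr : 1 ≤ r) (i : ℕ) (hi1 : 1 ≤ i) (hir : i ≤ r)
    (σ : Module.End ℚ (ℕ →₀ ℚ))
    (hσ : ∀ n : ℕ, σ (Finsupp.single n 1) = Finsupp.single (n + 1) 1)
    (S : ExteriorAlgebra ℚ (ℕ →₀ ℚ) →ₐ[ℚ] PowerSeries (ExteriorAlgebra ℚ (ℕ →₀ ℚ)))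
    (hS : ∀ m : ℕ →₀ ℚ,
      S (ι ℚ m) = PowerSeries.C (ι ℚ m) - PowerSeries.C (ι ℚ (σ m)) * PowerSeries.X)
    (m m' : ℕ →₀ ℚ)
    (h : ∀ η ∈ (LinearMap.range
        (ι ℚ : (ℕ →₀ ℚ) →ₗ[ℚ] ExteriorAlgebra ℚ (ℕ →₀ ℚ))) ^ (r - 1),
      ι ℚ m' * η = PowerSeries.coeff i (S (ι ℚ m * η))) :
    ∀ η ∈ (LinearMap.range
        (ι ℚ : (ℕ →₀ ℚ) →ₗ[ℚ] ExteriorAlgebra ℚ (ℕ →₀ ℚ))) ^ (r - 1),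
      ι ℚ (σ m') * η = PowerSeries.coeff i (S (ι ℚ (σ m) * η)) := by
  intro η hη
  rw [key_A σ S hS m' η, key_A σ S hS m η, map_sub, map_sub,
    h (PowerSeries.coeff 1 (S η)) (coeff_S_mem σ S hS (r-1) η hη 1),
    h η hη, swap_comm_S σ S hS (ι ℚ m * η) i 1]
end

section
/- For every n ≥ 1 and every j with 1 ≤ j ≤ n, the following identity holds in the polynomial ring ℤ[x_1, …, x_n]: ∑_{k=0}^{n} (−1)^k e_k(x_1, …, x_n) · h_{n−k}(x_1, …, x_j) = 0, where e_k(x_1,…,x_n) denotes the k-th elementary symmetric polynomial in all n variables (e_0 = 1) and h_m(x_1,…,x_j) denotes the complete homogeneous symmetric polynomial of degree m in the first j variables (h_0 = 1). -/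
open Finset MvPolynomial

noncomputable section Aux18

variable {R : Type*} [CommRing R]

/-- geometric series 1 + x t + x² t² + ... -/
def geom18 (x : R) : PowerSeries R := PowerSeries.mk fun m => x ^ m

lemma one_sub_mul_geom18 (x : R) :
    (1 - PowerSeries.C x * PowerSeries.X) * geom18 x = 1 := by
  ext k
  rw [sub_mul, one_mul, map_sub]
  cases k with
  | zero => simp [geom18]
  | succ k =>
      rw [mul_assoc]
      simp [geom18, PowerSeries.coeff_succ_X_mul, pow_succ, mul_comm]

lemma coeff_prod_one_add18 {σ : Type*} [DecidableEq σ] (c : σ → R) (s : Finset σ) (k : ℕ) :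
    PowerSeries.coeff k (∏ i ∈ s, (1 + PowerSeries.C (c i) * PowerSeries.X)) =
      ∑ t ∈ s.powersetCard k, ∏ i ∈ t, c i := by
  have h : ∀ t : Finset σ, (∏ i ∈ t, (PowerSeries.C (c i) * PowerSeries.X))
      = PowerSeries.C (∏ i ∈ t, c i) * PowerSeries.X ^ t.card := by
    intro t
    rw [Finset.prod_mul_distrib, map_prod, Finset.prod_const]
  simp_rw [add_comm (1 : PowerSeries R), Finset.prod_add, Finset.prod_const_one, mul_one,
    map_sum, h, PowerSeries.coeff_C_mul, PowerSeries.coeff_X_pow, mul_ite, mul_one, mul_zero]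
  rw [Finset.powersetCard_eq_filter, Finset.sum_filter]
  exact Finset.sum_congr rfl fun t _ => if_congr eq_comm rfl rfl

end Aux18

noncomputable section Aux18b
open MvPolynomial Finset
variable {R : Type*} [CommRing R]

lemma coeff_prod_geom18 {σ τ : Type*} [Fintype σ] [DecidableEq σ] (f : σ → τ) (m : ℕ) :
    PowerSeries.coeff m (∏ i : σ, geom18 (X (f i) : MvPolynomial τ R)) =
      MvPolynomial.rename f (hsymm σ R m) := by
  rw [PowerSeries.coeff_prod]
  simp_rw [hsymm, map_sum, ← Multiset.prod_hom', rename_X]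
  simp only [geom18, PowerSeries.coeff_mk]
  refine Finset.sum_bij' (fun l hl => (⟨Finsupp.toMultiset l, ?_⟩ : Sym σ m))
    (fun μ _ => Multiset.toFinsupp μ.1) ?_ ?_ ?_ ?_ ?_
  · rw [Finset.mem_finsuppAntidiag] at hl
    rw [Finsupp.card_toMultiset, Finsupp.sum_fintype _ _ fun _ => rfl]
    simpa using hl.1
  · intro l hl; exact Finset.mem_univ _
  · intro μ _
    rw [Finset.mem_finsuppAntidiag]
    refine ⟨?_, Finset.subset_univ _⟩
    have : ∀ a, (Multiset.toFinsupp μ.1) a = μ.1.count a := fun a => Multiset.toFinsupp_apply _ _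
    simp only [this]
    rw [Multiset.sum_count_eq_card fun a _ => Finset.mem_univ a]
    exact μ.2
  · intro l hl; simp
  · intro μ _; simp [Sym.ext_iff]; rfl
  · intro l hl
    simp only
    rw [Finset.prod_multiset_map_count]
    simp only [Finsupp.toFinset_toMultiset, Finsupp.count_toMultiset]
    exact (Finset.prod_subset (Finset.subset_univ _) fun i _ hi => by
      rw [Finsupp.notMem_support_iff.mp hi, pow_zero]).symm

end Aux18b

theorem stmt_18 (n : ℕ) (hn : 1 ≤ n) (j : ℕ) (hj1 : 1 ≤ j) (hjn : j ≤ n) :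
    ∑ k ∈ Finset.range (n + 1),
      (-1 : MvPolynomial (Fin n) ℤ) ^ k * MvPolynomial.esymm (Fin n) ℤ k *
        MvPolynomial.rename (Fin.castLE hjn) (MvPolynomial.hsymm (Fin j) ℤ (n - k)) = 0 := by
  classical
  open Finset MvPolynomial in
  set Rg := MvPolynomial (Fin n) ℤ with hRg
  set f : Fin n → PowerSeries Rg :=
    fun i => 1 - PowerSeries.C (X i) * PowerSeries.X with hf
  set E : PowerSeries Rg := ∏ i : Fin n, f i with hE
  set H : PowerSeries Rg :=
    ∏ i : Fin j, geom18 (X (Fin.castLE hjn i) : Rg) with hH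
  have hprodcoeff : ∀ (s : Finset (Fin n)) (k : ℕ),
      PowerSeries.coeff k (∏ i ∈ s, f i) =
        (-1) ^ k * ∑ t ∈ s.powersetCard k, ∏ i ∈ t, (X i : Rg) := by
    intro s k
    have h := coeff_prod_one_add18 (fun i : Fin n => -(X i : Rg)) s k
    simp only [map_neg, neg_mul, ← sub_eq_add_neg] at h
    rw [hf, h, Finset.mul_sum]
    refine Finset.sum_congr rfl fun t ht => ?_
    rw [Finset.mem_powersetCard] at ht
    rw [← ht.2, ← Finset.prod_const (-1 : Rg), ← Finset.prod_mul_distrib]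
    exact Finset.prod_congr rfl fun i _ => (neg_one_mul _).symm
  have hcoeffE : ∀ k, PowerSeries.coeff k E =
      (-1) ^ k * MvPolynomial.esymm (Fin n) ℤ k := fun k => hprodcoeff Finset.univ k
  have hcoeffH : ∀ m, PowerSeries.coeff m H =
      MvPolynomial.rename (Fin.castLE hjn) (MvPolynomial.hsymm (Fin j) ℤ m) :=
    fun m => coeff_prod_geom18 (Fin.castLE hjn) m
  set A : Finset (Fin n) := Finset.map (Fin.castLEEmb hjn) Finset.univ with hA
  have hEH : E * H = ∏ i ∈ Aᶜ, f i := by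
    have h1 : (∏ i ∈ A, f i) * H = 1 := by
      rw [hA, Finset.prod_map, ← Finset.prod_mul_distrib]
      simp only [Fin.coe_castLEEmb]
      rw [Finset.prod_eq_one]
      intro i _
      exact one_sub_mul_geom18 _
    calc E * H = ((∏ i ∈ A, f i) * ∏ i ∈ Aᶜ, f i) * H := by
          rw [Finset.prod_mul_prod_compl]
      _ = (∏ i ∈ Aᶜ, f i) * ((∏ i ∈ A, f i) * H) := by ring
      _ = ∏ i ∈ Aᶜ, f i := by rw [h1, mul_one]
  have hz : PowerSeries.coeff n (E * H) = 0 := by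
    rw [hEH, hprodcoeff]
    have hcard : Aᶜ.card < n := by
      rw [Finset.card_compl, hA, Finset.card_map, Finset.card_univ, Fintype.card_fin,
        Fintype.card_fin]
      omega
    rw [Finset.powersetCard_eq_empty.mpr hcard, Finset.sum_empty, mul_zero]
  rw [PowerSeries.coeff_mul, Finset.Nat.sum_antidiagonal_eq_sum_range_succ_mk] at hz
  simp only [hcoeffE, hcoeffH] at hz
  simpa only [mul_assoc] using hz
end
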